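/- arXiv:1710.04510 — 4 statements merged into one kernel-verified Lean document; each statement's English description precedes it below -/
import Mathlib

section
/- Let U_s be an admissible shear flow and define Φ_inv(μ) := (μ − 1) ∫₀^∞ F(y)/(μ − U_s(y))² dy with F(y) := 1 − U_s(y) + y U_s'(y). Then (i) the map μ ↦ Φ_inv(μ) is holomorphic on ℂ ∖ [0,1], and (ii) for every μ = a + ib with b > 0 and b² ≥ a(1−a), one has Im Φ_inv(μ) < 0. -/
open MeasureTheory Filter Set

noncomputable section

/-- The source term `F(y) = 1 - U(y) + y U'(y)` of the eigenmode ODE. -/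
def srcF (U : ℝ → ℝ) (y : ℝ) : ℝ := 1 - U y + y * deriv U y

/-- The displacement thickness `Δ_s = ∫₀^∞ (1 - U)`. -/
def deltaS (U : ℝ → ℝ) : ℝ := ∫ y in Ioi (0:ℝ), (1 - U y)

/-- An admissible shear flow: smooth, monotone, `U(0) = 0`, `U → 1`,
`U''(0) ≠ 0`, finitely many inflexion points, and the decay conditions of the paper. -/
structure AdmissibleShearFlow (U : ℝ → ℝ) : Prop where
  smooth : ContDiff ℝ (⊤ : ℕ∞) U
  mem_Ico : ∀ y, 0 ≤ y → U y ∈ Ico (0:ℝ) 1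
  zero_val : U 0 = 0
  deriv_pos : ∀ y, 0 ≤ y → 0 < deriv U y
  tendsto_one : Tendsto U atTop (nhds 1)
  snd_deriv_zero_ne : iteratedDeriv 2 U 0 ≠ 0
  finite_inflexions : {y : ℝ | 0 < y ∧ iteratedDeriv 2 U y = 0}.Finite
  integrable_defect : IntegrableOn (fun y => 1 - U y) (Ioi (0:ℝ))
  derivs_bounded : ∀ j : ℕ, 1 ≤ j → j ≤ 3 →
    ∃ M : ℝ, ∀ y, 0 ≤ y → |iteratedDeriv j U y| ≤ M
  decay_ratio₁ : Tendsto (fun y => (1 - U y) ^ 2 / deriv U y) atTop (nhds 0)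
  decay_ratio₂ : Tendsto (fun y => y * (1 - U y)) atTop (nhds 0)
  decay_ratio₃ : IntegrableOn
    (fun y => (1 - U y) ^ 2 * iteratedDeriv 2 U y / (deriv U y) ^ 2) (Ioi (0:ℝ))
  kappa_decay : ∃ κ : ℝ, 0 < κ ∧ κ < 1/2 ∧ ∃ yκ > (0:ℝ), ∃ cκ > (0:ℝ),
    ∀ y, yκ ≤ y →
      (1 - U y) ^ ((2:ℝ) - κ) * iteratedDeriv 2 U y ≤ -cκ * (deriv U y) ^ 3

/-- `φ` is a smooth solution of the eigenmode problem
`(μ - U_s)φ' + U_s'φ - (i/k)φ''' = F`, `φ(0) = 0`, `φ'(0) = 1`, `φ' → 0`, `φ → L`. -/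
def IsEigSolution (U : ℝ → ℝ) (μ : ℂ) (k : ℝ) (L : ℂ) (φ : ℝ → ℂ) : Prop :=
  ContDiff ℝ (⊤ : ℕ∞) φ ∧
  (∀ y, 0 ≤ y →
    (μ - (U y : ℂ)) * deriv φ y + ((deriv U y : ℝ) : ℂ) * φ y
      - Complex.I / (k : ℂ) * iteratedDeriv 3 φ y = (srcF U y : ℂ)) ∧
  φ 0 = 0 ∧ deriv φ 0 = 1 ∧
  Tendsto (deriv φ) atTop (nhds 0) ∧
  Tendsto φ atTop (nhds L)

/-- Same problem without the prescribed limit at infinity. -/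
def IsBLSolution (U : ℝ → ℝ) (μ : ℂ) (k : ℝ) (φ : ℝ → ℂ) : Prop :=
  ContDiff ℝ (⊤ : ℕ∞) φ ∧
  (∀ y, 0 ≤ y →
    (μ - (U y : ℂ)) * deriv φ y + ((deriv U y : ℝ) : ℂ) * φ y
      - Complex.I / (k : ℂ) * iteratedDeriv 3 φ y = (srcF U y : ℂ)) ∧
  φ 0 = 0 ∧ deriv φ 0 = 1 ∧ Tendsto (deriv φ) atTop (nhds 0)

/-- Cauchy principal value `PV ∫₀¹ h(u)/(u - a) du`. -/
def pvIntegral (h : ℝ → ℝ) (a : ℝ) : ℝ :=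
  limUnder (nhdsWithin (0:ℝ) (Ioi 0))
    (fun ε => ∫ u in Ioo (0:ℝ) 1 \ Ioo (a - ε) (a + ε), h u / (u - a))

/-- Inverse of the shear flow on `[0, ∞)`. -/
def shearInv (U : ℝ → ℝ) (u : ℝ) : ℝ := Function.invFunOn U (Ici 0) u

/-- `g(u) = (1-u)² U''(U⁻¹(u)) / (U'(U⁻¹(u)))³`. -/
def gfun (U : ℝ → ℝ) (u : ℝ) : ℝ :=
  (1 - u) ^ 2 * iteratedDeriv 2 U (shearInv U u) / (deriv U (shearInv U u)) ^ 3

/-- `G(a) = 1/(a U'(0)) + PV ∫₀¹ g(u)/(u-a) du + iπ g(a)`. -/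
def Gfun (U : ℝ → ℝ) (a : ℝ) : ℂ :=
  ((1 / (a * deriv U 0) + pvIntegral (gfun U) a : ℝ) : ℂ)
    + Complex.I * ((Real.pi * gfun U a : ℝ) : ℂ)

/-- Crossing abscissa `χ(y) = Re G(U(y))`. -/
def chiAbscissa (U : ℝ → ℝ) (y : ℝ) : ℝ := (Gfun U (U y)).re

/-- `ξ(γ)`: number of zeros of `U''` in `(0,∞)` with `χ(yᵢ) = γ`. -/
def xiEq (U : ℝ → ℝ) (γ : ℝ) : ℕ :=
  {y : ℝ | 0 < y ∧ iteratedDeriv 2 U y = 0 ∧ chiAbscissa U y = γ}.ncard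

/-- `ξ₊(γ)`: zeros of `U''` with `χ(yᵢ) < γ`, `U'' < 0` on the left and `U'' > 0`
on the right. -/
def xiPlus (U : ℝ → ℝ) (γ : ℝ) : ℕ :=
  {y : ℝ | 0 < y ∧ iteratedDeriv 2 U y = 0 ∧ chiAbscissa U y < γ ∧
    ∃ δ > (0:ℝ), (∀ z ∈ Ioo (y - δ) y, iteratedDeriv 2 U z < 0) ∧
      (∀ z ∈ Ioo y (y + δ), 0 < iteratedDeriv 2 U z)}.ncard

/-- `ξ₋(γ)`: zeros of `U''` with `χ(yᵢ) < γ`, `U'' > 0` on the left and `U'' < 0`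
on the right. -/
def xiMinus (U : ℝ → ℝ) (γ : ℝ) : ℕ :=
  {y : ℝ | 0 < y ∧ iteratedDeriv 2 U y = 0 ∧ chiAbscissa U y < γ ∧
    ∃ δ > (0:ℝ), (∀ z ∈ Ioo (y - δ) y, 0 < iteratedDeriv 2 U z) ∧
      (∀ z ∈ Ioo y (y + δ), iteratedDeriv 2 U z < 0)}.ncard

/-- `Φ_inv(μ) = (μ - 1) ∫₀^∞ F(y)/(μ - U(y))² dy`. -/
def PhiInv (U : ℝ → ℝ) (μ : ℂ) : ℂ :=
  (μ - 1) * ∫ y in Ioi (0:ℝ), (srcF U y : ℂ) / (μ - (U y : ℂ)) ^ 2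

/-- A weight function `ω ≥ 1` with `C_ω < ∞`. -/
structure WeightFn (ω : ℝ → ℝ) : Prop where
  pos : ∀ y, 0 ≤ y → 0 < ω y
  contDiff : ContDiff ℝ 1 ω
  one_le : ∀ y, 0 ≤ y → 1 ≤ ω y
  integrable_inv : IntegrableOn (fun y => 1 / ω y) (Ioi (0:ℝ))
  deriv_ratio_bdd : ∃ M : ℝ, ∀ y, 0 ≤ y → |deriv ω y / ω y| ≤ M
  log_ratio_bdd : ∃ M : ℝ, ∀ y, 0 ≤ y → Real.log (ω y) / (1 + y) ≤ M

/-- Weighted decay conditions: `(1-U_s) ∈ L²(ω)` and `(1+y)U_s^{(j)} ∈ L²(ω)`, `j = 1,2,3`. -/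
def WeightedDecay (U ω : ℝ → ℝ) : Prop :=
  IntegrableOn (fun y => (1 - U y) ^ 2 * ω y) (Ioi (0:ℝ)) ∧
  ∀ j : ℕ, 1 ≤ j → j ≤ 3 →
    IntegrableOn (fun y => ((1 + y) * iteratedDeriv j U y) ^ 2 * ω y) (Ioi (0:ℝ))

/-- Membership in the weighted space `L²(ω)`. -/
def MemL2w (ω : ℝ → ℝ) (f : ℝ → ℂ) : Prop :=
  IntegrableOn (fun y => ‖f y‖ ^ 2 * ω y) (Ioi (0:ℝ))

/-- The `L²(ω)` norm. -/
def wNorm (ω : ℝ → ℝ) (f : ℝ → ℂ) : ℝ :=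
  Real.sqrt (∫ y in Ioi (0:ℝ), ‖f y‖ ^ 2 * ω y)

/-- `φ` solves the homogeneous-boundary-conditions resolvent problem with forcing `f`. -/
def SolvesHom (U : ℝ → ℝ) (μ : ℂ) (k : ℝ) (f φ : ℝ → ℂ) : Prop :=
  ContDiff ℝ 2 φ ∧
  (∀ᵐ y ∂(volume.restrict (Ioi (0:ℝ))),
    (μ - (U y : ℂ)) * deriv φ y + ((deriv U y : ℝ) : ℂ) * φ y
      - Complex.I / (k : ℂ) * iteratedDeriv 3 φ y = f y) ∧
  φ 0 = 0 ∧ deriv φ 0 = 0 ∧ Tendsto (deriv φ) atTop (nhds 0)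

/-- Parameterization on `[0,1]` of the contour `C_η`: the segment from `iη` to `1 + iη`
followed by the upper half-circle of radius `1/2` centered at `1/2 + iη`. -/
def Ceta (η : ℝ) (t : ℝ) : ℂ :=
  if t ≤ 1/2 then ((2*t : ℝ) : ℂ) + (η : ℂ) * Complex.I
  else (1/2 : ℂ) + (η : ℂ) * Complex.I
    + (1/2 : ℂ) * Complex.exp (((Real.pi * (2*t - 1) : ℝ)) * Complex.I)

/-- Winding number `(1/2πi) ∮ dz/(z - p)` of a closed curve parameterized on `[0,1]`. -/
def windingNumber (c : ℝ → ℂ) (p : ℂ) : ℂ :=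
  (((2 * Real.pi : ℝ) : ℂ) * Complex.I)⁻¹ * ∫ t in (0:ℝ)..1, deriv c t / (c t - p)

/-- `q_μ(x) = |μ - x|⁴ - (2μ - 1 - x)(μ̄ - x)²`. -/
def qmu (μ : ℂ) (x : ℝ) : ℂ :=
  ((‖μ - (x:ℂ)‖ ^ 4 : ℝ) : ℂ) - (2*μ - 1 - (x:ℂ)) * ((starRingEnd ℂ) μ - (x:ℂ))^2

/-- `f(α) = -2iΔ_s/α + 1/√α`, principal square root (positive real part for `Re α > 0`). -/
def fIBL (Δ : ℝ) (α : ℂ) : ℂ := (-2 * Complex.I * (Δ:ℂ)) / α + 1 / (α ^ (1/2 : ℂ))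


/-! ### Auxiliary lemmas for the proof -/

section AuxPhi

variable {U : ℝ → ℝ}

lemma asf_contU (hU : AdmissibleShearFlow U) : Continuous U :=
  hU.smooth.continuous

lemma asf_contU' (hU : AdmissibleShearFlow U) : Continuous (deriv U) :=
  hU.smooth.continuous_deriv (by norm_num)

lemma asf_hasDerivAtU (hU : AdmissibleShearFlow U) (y : ℝ) :
    HasDerivAt U (deriv U y) y :=
  ((hU.smooth.differentiable (by norm_num)) y).hasDerivAt

lemma asf_contF (hU : AdmissibleShearFlow U) : Continuous (srcF U) := by
  unfold srcF
  exact (continuous_const.sub (asf_contU hU)).add (continuous_id.mul (asf_contU' hU))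

lemma asf_F_nonneg (hU : AdmissibleShearFlow U) {y : ℝ} (hy : 0 ≤ y) :
    0 ≤ srcF U y := by
  have h1 := (hU.mem_Ico y hy).2
  have h2 := hU.deriv_pos y hy
  unfold srcF
  nlinarith

lemma asf_U_pos (hU : AdmissibleShearFlow U) {y : ℝ} (hy : 0 < y) : 0 < U y := by
  have hmono : StrictMonoOn U (Ici (0:ℝ)) := by
    apply StrictMonoOn.mono (s := Ici (0:ℝ)) ?_ le_rfl
    exact strictMonoOn_of_hasDerivWithinAt_pos (convex_Ici 0) (asf_contU hU).continuousOn
      (fun x hx => ((asf_hasDerivAtU hU x).hasDerivWithinAt))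
      (fun x hx => hU.deriv_pos x (le_of_lt (by simpa [interior_Ici] using hx)))
  have := hmono (self_mem_Ici) (le_of_lt hy : (0:ℝ) ≤ y) hy
  rwa [hU.zero_val] at this

lemma asf_int_yU' (hU : AdmissibleShearFlow U) :
    IntegrableOn (fun y => y * deriv U y) (Ioi (0:ℝ)) := by
  have hc : Continuous (fun y => y * deriv U y) := continuous_id.mul (asf_contU' hU)
  apply integrableOn_Ioi_of_intervalIntegral_norm_bounded (deltaS U) 0
    (fun i : ℝ => hc.integrableOn_Ioc) tendsto_id
  filter_upwards [eventually_ge_atTop (0:ℝ)] with i hi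
  have hnorm : ∫ y in (0:ℝ)..i, ‖y * deriv U y‖ = ∫ y in (0:ℝ)..i, y * deriv U y := by
    apply intervalIntegral.integral_congr
    intro y hy
    rw [uIcc_of_le hi] at hy
    exact Real.norm_of_nonneg (mul_nonneg hy.1 (hU.deriv_pos y hy.1).le)
  have hibp : ∫ y in (0:ℝ)..i, y * deriv U y
      = i * U i - 0 * U 0 - ∫ y in (0:ℝ)..i, 1 * U y := by
    apply intervalIntegral.integral_mul_deriv_eq_deriv_mul
      (fun x _ => hasDerivAt_id x) (fun x _ => asf_hasDerivAtU hU x)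
      (intervalIntegrable_const (c := (1:ℝ))) ((asf_contU' hU).intervalIntegrable _ _)
  have hsplit : ∫ y in (0:ℝ)..i, (1:ℝ) * U y = i - ∫ y in (0:ℝ)..i, (1 - U y) := by
    have : ∫ y in (0:ℝ)..i, (1 - U y)
        = (∫ y in (0:ℝ)..i, (1:ℝ)) - ∫ y in (0:ℝ)..i, U y :=
      intervalIntegral.integral_sub (intervalIntegrable_const (c := (1:ℝ)))
        ((asf_contU hU).intervalIntegrable _ _)
    simp only [intervalIntegral.integral_const, smul_eq_mul, mul_one, sub_zero] at this
    simp only [one_mul]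
    linarith
  have hle : ∫ y in (0:ℝ)..i, (1 - U y) ≤ deltaS U := by
    rw [intervalIntegral.integral_of_le hi]
    unfold deltaS
    apply setIntegral_mono_set hU.integrable_defect
    · rw [Filter.EventuallyLE]
      rw [ae_restrict_iff' measurableSet_Ioi]
      filter_upwards with y hy
      have := (hU.mem_Ico y hy.le).2
      simp only [Pi.zero_apply]
      linarith
    · refine Filter.Eventually.of_forall ?_
      intro y
      exact fun hy => Ioc_subset_Ioi_self hy
  have hU_lt : U i < 1 := (hU.mem_Ico i hi).2
  show ∫ y in (0:ℝ)..i, ‖y * deriv U y‖ ≤ deltaS U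
  rw [hnorm, hibp, hsplit]
  have : i * U i - i ≤ 0 := by nlinarith
  simp only [zero_mul, sub_zero]
  linarith

lemma asf_intF (hU : AdmissibleShearFlow U) : IntegrableOn (srcF U) (Ioi (0:ℝ)) := by
  have : srcF U = fun y => (1 - U y) + y * deriv U y := by
    funext y; unfold srcF; ring
  rw [this]
  exact hU.integrable_defect.add (asf_int_yU' hU)

/-- Integrability of `g / (μ - U)^n` on `(0,∞)` given a uniform lower bound on the
denominator. -/
lemma asf_int_div (hU : AdmissibleShearFlow U) {μ : ℂ} {δ : ℝ} (hδ : 0 < δ)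
    (hsep : ∀ y, 0 ≤ y → δ ≤ ‖μ - (U y : ℂ)‖) {g : ℝ → ℝ} (hg : Continuous g)
    (hgnn : ∀ y, 0 ≤ y → 0 ≤ g y) (hgi : IntegrableOn g (Ioi (0:ℝ))) (n : ℕ) :
    IntegrableOn (fun y => (g y : ℂ) / (μ - (U y : ℂ)) ^ n) (Ioi (0:ℝ)) := by
  have hne : ∀ y ∈ Ioi (0:ℝ), (μ - (U y : ℂ)) ^ n ≠ 0 := by
    intro y hy
    apply pow_ne_zero
    intro h0
    have := hsep y (le_of_lt hy)
    rw [h0] at this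
    simp at this
    linarith
  have hmeas : AEStronglyMeasurable (fun y => (g y : ℂ) / (μ - (U y : ℂ)) ^ n)
      (volume.restrict (Ioi (0:ℝ))) := by
    apply ContinuousOn.aestronglyMeasurable _ measurableSet_Ioi
    exact ((Complex.continuous_ofReal.comp hg).continuousOn).div
      ((continuous_const.sub (Complex.continuous_ofReal.comp (asf_contU hU))).pow n).continuousOn
      hne
  apply Integrable.mono' (hgi.div_const (δ ^ n)) hmeas
  rw [ae_restrict_iff' measurableSet_Ioi]
  filter_upwards with y hy
  have hy' : (0:ℝ) ≤ y := (le_of_lt hy)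
  rw [norm_div, norm_pow, Complex.norm_real, Real.norm_of_nonneg (hgnn y hy')]
  apply div_le_div_of_nonneg_left ?_ ?_ ?_ |>.trans_eq rfl
  · exact hgnn y hy'
  · positivity
  · exact pow_le_pow_left₀ hδ.le (hsep y hy') n

lemma hasDerivAt_div_sub_sq (c u : ℂ) {w : ℂ} (h : w - u ≠ 0) :
    HasDerivAt (fun z => c / (z - u) ^ 2) (-2 * c / (w - u) ^ 3) w := by
  have h1 : HasDerivAt (fun z : ℂ => (z - u) ^ 2) (2 * (w - u)) w := by
    simpa using ((hasDerivAt_id w).sub_const u).fun_pow 2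
  have h2 := (h1.inv (pow_ne_zero 2 h)).const_mul c
  have heq : c * (-(2 * (w - u)) / ((w - u) ^ 2) ^ 2) = -2 * c / (w - u) ^ 3 := by
    field_simp
  rw [heq] at h2
  simpa [div_eq_mul_inv] using h2

lemma im_div_formula (a b x : ℝ) (hb : 0 < b) :
    ((((1 - x:ℝ):ℂ)) * (2*((a:ℂ)+(b:ℂ)*Complex.I) - 1 - (x:ℂ))
        / (((a:ℂ)+(b:ℂ)*Complex.I) - (x:ℂ))^2).im
      = (-2*b*(1-x)*(b^2 - (1-a)*(a-x))) / (((a-x)^2+b^2)^2) := by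
  set z : ℂ := ((a:ℂ)+(b:ℂ)*Complex.I) - (x:ℂ) with hzdef
  have hD : (0:ℝ) < (a-x)^2 + b^2 := by positivity
  have h1 : z * (starRingEnd ℂ) z = (((a-x)^2+b^2 : ℝ):ℂ) := by
    rw [Complex.mul_conj]
    have : Complex.normSq z = (a-x)^2+b^2 := by
      simp [hzdef, Complex.normSq_apply]; ring
    rw [this]
  have him : z.im = b := by simp [hzdef]
  have hz : z ≠ 0 := by
    intro h
    rw [h] at him
    simp at him
    exact (ne_of_gt hb) him.symm
  have hcz : (starRingEnd ℂ) z ≠ 0 := by simpa using hz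
  have h2 : (((1 - x:ℝ):ℂ)) * (2*((a:ℂ)+(b:ℂ)*Complex.I) - 1 - (x:ℂ)) / z^2
      = (((1 - x:ℝ):ℂ)) * (2*((a:ℂ)+(b:ℂ)*Complex.I) - 1 - (x:ℂ)) * ((starRingEnd ℂ) z)^2
        / ((((a-x)^2+b^2 : ℝ):ℂ))^2 := by
    rw [← h1, mul_pow]
    field_simp
  have hconj : (starRingEnd ℂ) z = (a:ℂ) - (x:ℂ) - (b:ℂ)*Complex.I := by
    simp [hzdef, map_sub, map_add, map_mul, Complex.conj_I, Complex.conj_ofReal]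
    ring
  rw [h2, hconj]
  rw [show ((((a-x)^2+b^2 : ℝ):ℂ))^2 = ((((a-x)^2+b^2)^2 : ℝ):ℂ) by push_cast; ring]
  rw [Complex.div_ofReal_im]
  congr 1
  simp only [show ((a:ℂ) - (x:ℂ) - (b:ℂ)*Complex.I)^2
      = (((a-x)^2 - b^2 : ℝ):ℂ) + ((-2*b*(a-x) : ℝ):ℂ)*Complex.I by
    push_cast; ring_nf; rw [Complex.I_sq]; ring]
  simp [Complex.mul_im, Complex.mul_re, ← Complex.ofReal_pow, ← Complex.ofReal_mul,
    ← Complex.ofReal_add, ← Complex.ofReal_sub, ← Complex.ofReal_neg]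
  ring

lemma P_pos (a b x : ℝ) (hb : 0 < b) (hab : a * (1-a) ≤ b^2) (hx0 : 0 < x) (hx1 : x < 1) :
    0 < b^2 - (1-a)*(a-x) := by
  rcases le_or_gt 1 a with h | h
  · nlinarith [mul_nonneg (by linarith : (0:ℝ) ≤ a - 1) (by linarith : (0:ℝ) ≤ a - x)]
  · nlinarith [mul_pos hx0 (by linarith : (0:ℝ) < 1 - a)]

end AuxPhi

/-- Lemma (holomorphy of `Φ_inv` off `[0,1]` and location of possible roots). -/
theorem phiInv_holomorphic_and_negative_im (U : ℝ → ℝ)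
    (hU : AdmissibleShearFlow U) :
    DifferentiableOn ℂ (PhiInv U) ((fun x : ℝ => (x : ℂ)) '' Icc (0:ℝ) 1)ᶜ ∧
    ∀ a b : ℝ, 0 < b → a * (1 - a) ≤ b ^ 2 →
      (PhiInv U ((a : ℂ) + (b : ℂ) * Complex.I)).im < 0 := by
  constructor
  · -- holomorphy
    intro μ₀ hμ₀
    apply DifferentiableAt.differentiableWithinAt
    have hK : IsCompact ((fun x : ℝ => (x : ℂ)) '' Icc (0:ℝ) 1) :=
      isCompact_Icc.image Complex.continuous_ofReal
    obtain ⟨ε, hε, hball⟩ := Metric.isOpen_iff.1 hK.isClosed.isOpen_compl μ₀ hμ₀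
    have hε2 : (0:ℝ) < ε / 2 := by linarith
    have hsep : ∀ μ' ∈ Metric.ball μ₀ (ε/2), ∀ y, 0 ≤ y → ε/2 ≤ ‖μ' - (U y : ℂ)‖ := by
      intro μ' hμ' y hy
      by_contra hlt
      push_neg at hlt
      have hxK : ((U y : ℝ) : ℂ) ∈ (fun x : ℝ => (x : ℂ)) '' Icc (0:ℝ) 1 :=
        ⟨U y, ⟨(hU.mem_Ico y hy).1, ((hU.mem_Ico y hy).2).le⟩, rfl⟩
      have : ((U y : ℝ) : ℂ) ∈ Metric.ball μ₀ ε := by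
        rw [Metric.mem_ball]
        have h1 : dist ((U y:ℝ):ℂ) μ' < ε/2 := by
          rw [dist_comm, dist_eq_norm]; exact hlt
        have h2 : dist μ' μ₀ < ε/2 := Metric.mem_ball.1 hμ'
        calc dist ((U y:ℝ):ℂ) μ₀ ≤ dist ((U y:ℝ):ℂ) μ' + dist μ' μ₀ := dist_triangle _ _ _
          _ < ε/2 + ε/2 := add_lt_add h1 h2
          _ = ε := by ring
      exact (hball this) hxK
    have hself : μ₀ ∈ Metric.ball μ₀ (ε/2) := Metric.mem_ball_self hε2
    have hder := hasDerivAt_integral_of_dominated_loc_of_deriv_le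
      (μ := volume.restrict (Ioi (0:ℝ)))
      (F := fun μ' y => (srcF U y : ℂ) / (μ' - (U y : ℂ)) ^ 2)
      (F' := fun μ' y => (-2) * (srcF U y : ℂ) / (μ' - (U y : ℂ)) ^ 3)
      (x₀ := μ₀) (bound := fun y => 2 * srcF U y / (ε/2) ^ 3)
      (s := Metric.ball μ₀ (ε/2)) (Metric.ball_mem_nhds μ₀ hε2) ?_ ?_ ?_ ?_ ?_ ?_
    · have hdiff : DifferentiableAt ℂ
          (fun μ' => (μ' - 1) * ∫ y in Ioi (0:ℝ), (srcF U y : ℂ) / (μ' - (U y : ℂ)) ^ 2) μ₀ :=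
        (differentiableAt_id.sub (differentiableAt_const 1)).mul hder.2.differentiableAt
      exact hdiff
    · filter_upwards [Metric.ball_mem_nhds μ₀ hε2] with μ' hμ'
      exact (asf_int_div hU hε2 (hsep μ' hμ') (asf_contF hU)
        (fun y hy => asf_F_nonneg hU hy) (asf_intF hU) 2).aestronglyMeasurable
    · exact asf_int_div hU hε2 (hsep μ₀ hself) (asf_contF hU)
        (fun y hy => asf_F_nonneg hU hy) (asf_intF hU) 2
    · have := (asf_int_div hU hε2 (hsep μ₀ hself) (asf_contF hU)
        (fun y hy => asf_F_nonneg hU hy) (asf_intF hU) 3).aestronglyMeasurable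
      have h2 := this.const_mul (-2 : ℂ)
      apply h2.congr
      filter_upwards with y
      rw [mul_div_assoc]
    · rw [ae_restrict_iff' measurableSet_Ioi]
      filter_upwards with y hy
      intro μ' hμ'
      have hy' : (0:ℝ) ≤ y := le_of_lt hy
      have hsepy := hsep μ' hμ' y hy'
      rw [norm_div, norm_mul, norm_pow, Complex.norm_real,
        Real.norm_of_nonneg (asf_F_nonneg hU hy')]
      have hnum : ‖(-2 : ℂ)‖ = 2 := by simp
      rw [hnum]
      gcongr
      all_goals first
        | exact hsepy
        | linarith [asf_F_nonneg hU hy']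
    · have : (fun y => 2 * srcF U y / (ε/2) ^ 3)
          = fun y => (2 / (ε/2) ^ 3) * srcF U y := by
        funext y; ring
      rw [this]
      exact (asf_intF hU).const_mul _
    · rw [ae_restrict_iff' measurableSet_Ioi]
      filter_upwards with y hy
      intro μ' hμ'
      have hy' : (0:ℝ) ≤ y := le_of_lt hy
      have hne : μ' - (U y : ℂ) ≠ 0 := by
        intro h0
        have := hsep μ' hμ' y hy'
        rw [h0] at this; simp at this; linarith
      exact hasDerivAt_div_sub_sq _ _ hne
  · -- negativity of the imaginary part
    intro a b hb hab
    set μ : ℂ := (a:ℂ) + (b:ℂ) * Complex.I with hμdef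
    have hne : ∀ y : ℝ, μ - (U y : ℂ) ≠ 0 := by
      intro y h0
      have him0 : (μ - (U y:ℂ)).im = b := by simp [hμdef]
      rw [h0] at him0; simp at him0; exact (ne_of_gt hb) him0.symm
    have hne1 : μ - 1 ≠ 0 := by
      intro h0
      have him0 : (μ - 1).im = b := by simp [hμdef]
      rw [h0] at him0; simp at him0; exact (ne_of_gt hb) him0.symm
    have hsep : ∀ y, 0 ≤ y → b ≤ ‖μ - (U y : ℂ)‖ := by
      intro y hy
      have h1 : (μ - (U y:ℂ)).im = b := by simp [hμdef]
      calc b = |(μ - (U y:ℂ)).im| := by rw [h1]; exact (abs_of_pos hb).symm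
        _ ≤ ‖μ - (U y:ℂ)‖ := Complex.abs_im_le_norm _
    have hcont1mU : Continuous (fun y => 1 - U y) := continuous_const.sub (asf_contU hU)
    have h1mUnn : ∀ y, (0:ℝ) ≤ y → 0 ≤ 1 - U y := fun y hy => by
      linarith [(hU.mem_Ico y hy).2]
    have hcyU' : Continuous (fun y => y * deriv U y) := continuous_id.mul (asf_contU' hU)
    have hyU'nn : ∀ y, (0:ℝ) ≤ y → 0 ≤ y * deriv U y := fun y hy =>
      mul_nonneg hy (hU.deriv_pos y hy).le
    have h1 := asf_int_div hU hb hsep hcont1mU h1mUnn hU.integrable_defect 2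
    have hg1 := asf_int_div hU hb hsep hcyU' hyU'nn (asf_int_yU' hU) 2
    have hq1 := asf_int_div hU hb hsep hcont1mU h1mUnn hU.integrable_defect 1
    have hg2 : IntegrableOn (fun y => ((1 - U y:ℝ):ℂ)/((μ - (U y:ℂ))*(μ-1)))
        (Ioi (0:ℝ)) := by
      apply (hq1.const_mul ((μ-1)⁻¹)).congr
      filter_upwards with y
      rw [pow_one]
      field_simp [hne y, hne1]
    -- Step A : the integration-by-parts identity
    have hders : ∀ y : ℝ, HasDerivAt
        (fun t : ℝ => (t:ℂ)/(μ - (U t:ℂ)) - (t:ℂ)/(μ - 1))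
        (((y * deriv U y:ℝ):ℂ)/(μ - (U y:ℂ))^2
          - ((1 - U y:ℝ):ℂ)/((μ - (U y:ℂ))*(μ-1))) y := by
      intro y
      have hid : HasDerivAt (fun t : ℝ => ((t:ℝ):ℂ)) 1 y := by
        simpa using (hasDerivAt_id y).ofReal_comp
      have hden : HasDerivAt (fun t : ℝ => μ - (U t:ℂ)) (-((deriv U y:ℝ):ℂ)) y := by
        simpa using ((asf_hasDerivAtU hU y).ofReal_comp).const_sub μ
      have hdiv := hid.div hden (hne y)
      have hconst := hid.div_const (μ - 1)
      have hval : (1 * (μ - (U y:ℂ)) - (y:ℂ) * (-((deriv U y:ℝ):ℂ)))/(μ - (U y:ℂ))^2 - 1/(μ-1)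
          = ((y * deriv U y:ℝ):ℂ)/(μ - (U y:ℂ))^2
            - ((1 - U y:ℝ):ℂ)/((μ - (U y:ℂ))*(μ-1)) := by
        push_cast
        field_simp [hne y, hne1]
        ring
      rw [← hval]
      exact hdiv.sub hconst
    have hcontg : Continuous (fun y => ((y * deriv U y:ℝ):ℂ)/(μ - (U y:ℂ))^2
        - ((1 - U y:ℝ):ℂ)/((μ - (U y:ℂ))*(μ-1))) := by
      apply Continuous.sub
      · exact (Complex.continuous_ofReal.comp hcyU').div
          ((continuous_const.sub (Complex.continuous_ofReal.comp (asf_contU hU))).pow 2)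
          (fun y => pow_ne_zero 2 (hne y))
      · exact (Complex.continuous_ofReal.comp hcont1mU).div
          ((continuous_const.sub (Complex.continuous_ofReal.comp (asf_contU hU))).mul
            continuous_const)
          (fun y => mul_ne_zero (hne y) hne1)
    have hFTC : ∀ i : ℝ, (∫ y in (0:ℝ)..i, (((y * deriv U y:ℝ):ℂ)/(μ - (U y:ℂ))^2
          - ((1 - U y:ℝ):ℂ)/((μ - (U y:ℂ))*(μ-1))))
        = (i:ℂ)/(μ - (U i:ℂ)) - (i:ℂ)/(μ-1) := by
      intro i
      rw [intervalIntegral.integral_eq_sub_of_hasDerivAt (fun y _ => hders y)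
        (hcontg.intervalIntegrable _ _)]
      simp
    have hlim2 : Tendsto (fun i : ℝ => (i:ℂ)/(μ - (U i:ℂ)) - (i:ℂ)/(μ-1)) atTop (nhds 0) := by
      have heq : ∀ i : ℝ, (i:ℂ)/(μ - (U i:ℂ)) - (i:ℂ)/(μ-1)
          = ((i * (U i - 1):ℝ):ℂ) * ((μ - (U i:ℂ))*(μ-1))⁻¹ := by
        intro i
        push_cast
        field_simp [hne i, hne1]
        ring
      simp only [heq]
      have ht1 : Tendsto (fun i : ℝ => ((i * (U i - 1):ℝ):ℂ)) atTop (nhds 0) := by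
        have h0 : Tendsto (fun i : ℝ => i * (U i - 1)) atTop (nhds 0) := by
          have := hU.decay_ratio₂.neg
          simp only [neg_zero] at this
          apply this.congr
          intro i; ring
        have h1' := (Complex.continuous_ofReal.tendsto 0).comp h0
        rw [show ((0:ℝ):ℂ) = 0 from rfl] at h1'
        exact h1'.congr (fun i => by simp [Function.comp])
      have ht2 : Tendsto (fun i : ℝ => ((μ - (U i:ℂ))*(μ-1))⁻¹) atTop
          (nhds (((μ-1)*(μ-1))⁻¹)) := by
        apply Tendsto.inv₀
        · apply Tendsto.mul _ tendsto_const_nhds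
          have hc := (Complex.continuous_ofReal.tendsto 1).comp hU.tendsto_one
          have := (tendsto_const_nhds (x := μ) (f := atTop)).sub hc
          simpa using this
        · exact mul_ne_zero hne1 hne1
      simpa using ht1.mul ht2
    have hlim1 : Tendsto (fun i : ℝ => (∫ y in (0:ℝ)..i,
          (((y * deriv U y:ℝ):ℂ)/(μ - (U y:ℂ))^2
            - ((1 - U y:ℝ):ℂ)/((μ - (U y:ℂ))*(μ-1))))) atTop
        (nhds (∫ y in Ioi (0:ℝ), (((y * deriv U y:ℝ):ℂ)/(μ - (U y:ℂ))^2
          - ((1 - U y:ℝ):ℂ)/((μ - (U y:ℂ))*(μ-1))))) := by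
      exact intervalIntegral_tendsto_integral_Ioi 0 (hg1.sub hg2) tendsto_id
    have hA : (∫ y in Ioi (0:ℝ), ((y * deriv U y:ℝ):ℂ)/(μ - (U y:ℂ))^2)
        = ∫ y in Ioi (0:ℝ), ((1 - U y:ℝ):ℂ)/((μ - (U y:ℂ))*(μ-1)) := by
      have h0 : Tendsto (fun i : ℝ => (∫ y in (0:ℝ)..i,
            (((y * deriv U y:ℝ):ℂ)/(μ - (U y:ℂ))^2
              - ((1 - U y:ℝ):ℂ)/((μ - (U y:ℂ))*(μ-1))))) atTop (nhds 0) := by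
        simp only [hFTC]
        exact hlim2
      have hsub0 := tendsto_nhds_unique hlim1 h0
      have hss := (integral_sub hg1 hg2).symm.trans hsub0
      exact sub_eq_zero.mp hss
    -- Step B : closed form of PhiInv
    have hsplitF : (∫ y in Ioi (0:ℝ), (srcF U y : ℂ)/(μ - (U y:ℂ))^2)
        = (∫ y in Ioi (0:ℝ), ((1 - U y:ℝ):ℂ)/(μ - (U y:ℂ))^2)
          + ∫ y in Ioi (0:ℝ), ((y * deriv U y:ℝ):ℂ)/(μ - (U y:ℂ))^2 := by
      have hptw : ∀ y : ℝ, (srcF U y : ℂ)/(μ - (U y:ℂ))^2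
          = ((1 - U y:ℝ):ℂ)/(μ - (U y:ℂ))^2 + ((y * deriv U y:ℝ):ℂ)/(μ - (U y:ℂ))^2 := by
        intro y
        unfold srcF
        push_cast
        ring
      simp only [hptw]
      exact integral_add h1 hg1
    have hrepr : PhiInv U μ = ∫ y in Ioi (0:ℝ),
        ((1 - U y:ℝ):ℂ) * (2*μ - 1 - (U y:ℂ)) / (μ - (U y:ℂ))^2 := by
      unfold PhiInv
      rw [hsplitF, hA, mul_add,
        ← MeasureTheory.integral_const_mul, ← MeasureTheory.integral_const_mul,
        ← integral_add (h1.const_mul _) (hg2.const_mul _)]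
      apply integral_congr_ae
      apply Filter.Eventually.of_forall
      intro y
      field_simp [hne y, hne1]
      ring
    -- Step C : the imaginary part
    have htgt : IntegrableOn
        (fun y => ((1 - U y:ℝ):ℂ) * (2*μ - 1 - (U y:ℂ)) / (μ - (U y:ℂ))^2) (Ioi (0:ℝ)) := by
      apply ((h1.const_mul (μ-1)).add (hg2.const_mul (μ-1))).congr
      filter_upwards with y
      simp only [Pi.add_apply]
      field_simp [hne y, hne1]
      ring
    have him : (PhiInv U μ).im = ∫ y in Ioi (0:ℝ),
        (((1 - U y:ℝ):ℂ) * (2*μ - 1 - (U y:ℂ)) / (μ - (U y:ℂ))^2).im := by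
      rw [hrepr]
      have := integral_im (μ := volume.restrict (Ioi (0:ℝ))) htgt
      simpa using this.symm
    have hneg : ∀ y ∈ Ioi (0:ℝ),
        (((1 - U y:ℝ):ℂ) * (2*μ - 1 - (U y:ℂ)) / (μ - (U y:ℂ))^2).im < 0 := by
      intro y hy
      have hy' : (0:ℝ) < y := hy
      have hx0 : 0 < U y := asf_U_pos hU hy'
      have hx1 : U y < 1 := (hU.mem_Ico y hy'.le).2
      have hform := im_div_formula a b (U y) hb
      have hP := P_pos a b (U y) hb hab hx0 hx1
      rw [hμdef]
      rw [show ((U y:ℝ):ℂ) = ((U y : ℝ):ℂ) from rfl]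
      rw [hform]
      apply div_neg_of_neg_of_pos
      · nlinarith [mul_pos (mul_pos hb (by linarith : (0:ℝ) < 1 - U y)) hP]
      · have hbD : (0:ℝ) < (a - U y)^2 + b^2 := by positivity
        positivity
    rw [him]
    have hint_im : IntegrableOn
        (fun y => (((1 - U y:ℝ):ℂ) * (2*μ - 1 - (U y:ℂ)) / (μ - (U y:ℂ))^2).im)
        (Ioi (0:ℝ)) := htgt.im
    have hpos : 0 < ∫ y in Ioi (0:ℝ),
        (-(((1 - U y:ℝ):ℂ) * (2*μ - 1 - (U y:ℂ)) / (μ - (U y:ℂ))^2).im) := by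
      have hfnn : 0 ≤ᵐ[volume.restrict (Ioi (0:ℝ))]
          (fun y => (-(((1 - U y:ℝ):ℂ) * (2*μ - 1 - (U y:ℂ)) / (μ - (U y:ℂ))^2).im)) := by
        filter_upwards [ae_restrict_mem measurableSet_Ioi] with y hy
        simp only [Pi.zero_apply]
        linarith [hneg y hy]
      rw [setIntegral_pos_iff_support_of_nonneg_ae hfnn hint_im.neg]
      · apply lt_of_lt_of_le
          (show (0:ENNReal) < volume (Ioi (0:ℝ)) by simp [Real.volume_Ioi])
        apply measure_mono
        intro y hy
        refine ⟨?_, hy⟩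
        simp only [Function.mem_support]
        intro h0
        exact absurd (neg_eq_zero.mp h0) (ne_of_lt (hneg y hy))
    rw [integral_neg] at hpos
    linarith

end
end

section
/- Let μ = a + ib ∈ Γ₁ := {a + ib ∈ ℂ : 0 < a < 1, 0 < b < √(3a(1−a)²/(4−3a))}. Define q_μ(x) := |μ − x|⁴ − (2μ − 1 − x)(μ̄ − x)² for x ∈ [0,1], where μ̄ is the complex conjugate of μ. Then there exist 0 ≤ x₁ < x₂ < x₃ ≤ 1 such that { α₁ q_μ(x₁) + α₂ q_μ(x₂) + α₃ q_μ(x₃) : (α₁, α₂, α₃) ∈ [0,∞)³ } = ℂ. -/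
open MeasureTheory Filter Set

noncomputable section

/-- Lemma (for `μ ∈ Γ₁`, three values of `q_μ` positively span `ℂ`). -/
theorem qmu_spans (μ : ℂ) (ha : 0 < μ.re) (ha1 : μ.re < 1) (hb : 0 < μ.im)
    (hb1 : μ.im < Real.sqrt (3 * μ.re * (1 - μ.re) ^ 2 / (4 - 3 * μ.re))) :
    ∃ x₁ x₂ x₃ : ℝ, 0 ≤ x₁ ∧ x₁ < x₂ ∧ x₂ < x₃ ∧ x₃ ≤ 1 ∧
      {z : ℂ | ∃ α₁ α₂ α₃ : ℝ, 0 ≤ α₁ ∧ 0 ≤ α₂ ∧ 0 ≤ α₃ ∧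
        z = (α₁ : ℂ) * qmu μ x₁ + (α₂ : ℂ) * qmu μ x₂ + (α₃ : ℂ) * qmu μ x₃}
      = Set.univ := by
  classical
  set a := μ.re with hadef
  set b := μ.im with hbdef
  have h1a : (0:ℝ) < 1 - a := by linarith
  have h43 : (0:ℝ) < 4 - 3*a := by linarith
  have hb2 : b^2 < 3*a*(1-a)^2/(4-3*a) := (Real.lt_sqrt hb.le).mp hb1
  have hkey : b^2*(4-3*a) < 3*a*(1-a)^2 := by
    rw [lt_div_iff₀ h43] at hb2; linarith
  have hb2p : (0:ℝ) < b^2 := by positivity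
  -- component formulas for qmu
  have hre : ∀ x : ℝ, (qmu μ x).re
      = ((a-x)^2+b^2)^2 - (2*a-1-x)*((a-x)^2-b^2) - 4*b^2*(a-x) := by
    intro x
    have hnorm : ‖μ - (x:ℂ)‖^4 = ((a-x)^2+b^2)^2 := by
      have h2 : ‖μ - (x:ℂ)‖^2 = (a-x)^2+b^2 := by
        rw [Complex.sq_norm, Complex.normSq_apply]
        simp
        ring
      calc ‖μ - (x:ℂ)‖^4 = (‖μ - (x:ℂ)‖^2)^2 := by ring
        _ = _ := by rw [h2]
    rw [qmu, Complex.sub_re, Complex.ofReal_re, hnorm]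
    simp [Complex.mul_re, Complex.mul_im, pow_two]
    ring
  have him : ∀ x : ℝ, (qmu μ x).im
      = 2*b*(a-x)*(2*a-1-x) - 2*b*((a-x)^2-b^2) := by
    intro x
    rw [qmu, Complex.sub_im, Complex.ofReal_im]
    simp [Complex.mul_re, Complex.mul_im, pow_two]
    ring
  -- the three positive coefficients annihilating v1, v2, v3
  set e1 : ℝ := b^2*(1-a)*(4-a)*((1-a)^2+b^2) with he1def
  set e2 : ℝ := ((1-a)^2+b^2)*(3*a*(1-a)^2 - b^2*(4-3*a)) with he2def
  set e3 : ℝ := a*b^2*(b^2*(2-a) + (1-a)^3) with he3def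
  have he1 : 0 < e1 := by
    rw [he1def]
    have h4a : (0:ℝ) < 4 - a := by linarith
    positivity
  have he2 : 0 < e2 := by
    rw [he2def]
    have : (0:ℝ) < 3*a*(1-a)^2 - b^2*(4-3*a) := by linarith
    positivity
  have he3 : 0 < e3 := by
    rw [he3def]
    have h2a : (0:ℝ) < 2 - a := by linarith
    positivity
  have hzero : (e1:ℂ) * qmu μ 0 + (e2:ℂ) * qmu μ a + (e3:ℂ) * qmu μ 1 = 0 := by
    rw [Complex.ext_iff]
    constructor
    · simp only [Complex.add_re, Complex.mul_re, Complex.ofReal_re, Complex.ofReal_im,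
        Complex.zero_re, zero_mul, sub_zero]
      rw [hre 0, hre a, hre 1, he1def, he2def, he3def]
      ring
    · simp only [Complex.add_im, Complex.mul_im, Complex.ofReal_re, Complex.ofReal_im,
        Complex.zero_im, zero_mul, add_zero]
      rw [him 0, him a, him 1, he1def, he2def, he3def]
      ring
  -- determinant of (v2, v3)
  set R2 : ℝ := (qmu μ a).re with hR2
  set I2 : ℝ := (qmu μ a).im with hI2
  set R3 : ℝ := (qmu μ 1).re with hR3
  set I3 : ℝ := (qmu μ 1).im with hI3
  set D : ℝ := R2*I3 - I2*R3 with hDdef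
  have hDval : D = -(2*b^3*(1-a)*((1-a)^2+b^2)*(4-a)) := by
    rw [hDdef, hR2, hI2, hR3, hI3, hre a, hre 1, him a, him 1]
    ring
  have hDne : D ≠ 0 := by
    rw [hDval]
    have h4a : (0:ℝ) < 4 - a := by linarith
    have : (0:ℝ) < 2*b^3*(1-a)*((1-a)^2+b^2)*(4-a) := by positivity
    linarith
  refine ⟨0, a, 1, le_refl 0, ha, ha1, le_refl 1, ?_⟩
  rw [Set.eq_univ_iff_forall]
  intro z
  set β2 : ℝ := (z.re*I3 - z.im*R3)/D with hβ2def
  set β3 : ℝ := (R2*z.im - I2*z.re)/D with hβ3def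
  have hz : z = (β2:ℂ) * qmu μ a + (β3:ℂ) * qmu μ 1 := by
    rw [Complex.ext_iff]
    constructor
    · simp only [Complex.add_re, Complex.mul_re, Complex.ofReal_re, Complex.ofReal_im,
        zero_mul, sub_zero, ← hR2, ← hR3]
      rw [hβ2def, hβ3def]
      field_simp
      rw [hDdef]
      ring
    · simp only [Complex.add_im, Complex.mul_im, Complex.ofReal_re, Complex.ofReal_im,
        zero_mul, add_zero, ← hI2, ← hI3]
      rw [hβ2def, hβ3def]
      field_simp
      rw [hDdef]
      ring
  set t : ℝ := max 0 (max (-β2/e2) (-β3/e3)) with htdef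
  have ht0 : 0 ≤ t := le_max_left _ _
  have ht2 : -β2/e2 ≤ t := le_trans (le_max_left _ _) (le_max_right _ _)
  have ht3 : -β3/e3 ≤ t := le_trans (le_max_right _ _) (le_max_right _ _)
  have hα2 : 0 ≤ β2 + t*e2 := by
    have := (div_le_iff₀ he2).mp ht2
    linarith
  have hα3 : 0 ≤ β3 + t*e3 := by
    have := (div_le_iff₀ he3).mp ht3
    linarith
  refine ⟨t*e1, β2 + t*e2, β3 + t*e3, mul_nonneg ht0 he1.le, hα2, hα3, ?_⟩
  push_cast
  linear_combination hz - (t:ℂ) * hzero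

end
end

section
/- Let μ ∈ ℂ with Im μ ≠ 0 and let φ ∈ C⁰([0,1], ℂ). Assume there exist 0 ≤ x₁ < x₂ < x₃ ≤ 1 such that { α₁ φ(x₁) + α₂ φ(x₂) + α₃ φ(x₃) : (α₁, α₂, α₃) ∈ [0,∞)³ } = ℂ. Then there exists a smooth strictly increasing function U_s : [0,∞) → [0,1) with U_s(0) = 0, converging exponentially to 1 at infinity (i.e., 1 − U_s(y) = C e^{−y} for y large, for some constant C > 0), such that ∫₀^∞ (1 − U_s(y)) / |μ − U_s(y)|⁴ · φ(U_s(y)) dy = 0. -/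
open MeasureTheory Filter Set

noncomputable section

/-- Nonnegative spanning of `ℂ` by three vectors. -/
def Span3 (z₁ z₂ z₃ : ℂ) : Prop :=
  ∀ w : ℂ, ∃ a b c : ℝ, 0 ≤ a ∧ 0 ≤ b ∧ 0 ≤ c ∧
    w = (a : ℂ) * z₁ + (b : ℂ) * z₂ + (c : ℂ) * z₃

/-- Real 2x2 determinant of two complex numbers. -/
def detR (a b : ℂ) : ℝ := a.re * b.im - a.im * b.re

lemma cramer_id (a b c : ℂ) :
    ((detR a b : ℝ) : ℂ) * c = ((detR c b : ℝ) : ℂ) * a + ((detR a c : ℝ) : ℂ) * b := by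
  apply Complex.ext <;> simp [detR, Complex.add_re, Complex.add_im, Complex.mul_re,
    Complex.mul_im] <;> ring

lemma span3_scale {z₁ z₂ z₃ : ℂ} {c₁ c₂ c₃ : ℝ} (h : Span3 z₁ z₂ z₃)
    (h1 : 0 < c₁) (h2 : 0 < c₂) (h3 : 0 < c₃) :
    Span3 ((c₁ : ℂ) * z₁) ((c₂ : ℂ) * z₂) ((c₃ : ℂ) * z₃) := by
  intro w
  obtain ⟨a, b, c, ha, hb, hc, hw⟩ := h w
  refine ⟨a / c₁, b / c₂, c / c₃, by positivity, by positivity, by positivity, ?_⟩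
  have hc1 : (c₁ : ℂ) ≠ 0 := Complex.ofReal_ne_zero.mpr h1.ne'
  have hc2 : (c₂ : ℂ) ≠ 0 := Complex.ofReal_ne_zero.mpr h2.ne'
  have hc3 : (c₃ : ℂ) ≠ 0 := Complex.ofReal_ne_zero.mpr h3.ne'
  have e1 : ((a / c₁ : ℝ) : ℂ) * ((c₁ : ℂ) * z₁) = (a : ℂ) * z₁ := by
    push_cast; field_simp; try ring
  have e2 : ((b / c₂ : ℝ) : ℂ) * ((c₂ : ℂ) * z₂) = (b : ℂ) * z₂ := by
    push_cast; field_simp; try ring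
  have e3 : ((c / c₃ : ℝ) : ℂ) * ((c₃ : ℂ) * z₃) = (c : ℂ) * z₃ := by
    push_cast; field_simp; try ring
  rw [e1, e2, e3]; exact hw

lemma span3_perturb (z₁ z₂ z₃ : ℂ) (hD : detR z₁ z₂ ≠ 0) (γ₁ γ₂ γ₃ : ℝ)
    (hγ1 : 0 < γ₁) (hγ2 : 0 < γ₂) (hγ3 : 0 < γ₃)
    (hsum : (γ₁ : ℂ) * z₁ + (γ₂ : ℂ) * z₂ + (γ₃ : ℂ) * z₃ = 0) :
    ∃ ε > 0, ∀ u₁ u₂ u₃ : ℂ, ‖u₁ - z₁‖ < ε → ‖u₂ - z₂‖ < ε → ‖u₃ - z₃‖ < ε →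
      Span3 u₁ u₂ u₃ := by
  -- re/im components of hsum
  have hre : γ₁ * z₁.re + γ₂ * z₂.re + γ₃ * z₃.re = 0 := by
    have := congrArg Complex.re hsum
    simpa [Complex.add_re, Complex.mul_re] using this
  have him : γ₁ * z₁.im + γ₂ * z₂.im + γ₃ * z₃.im = 0 := by
    have := congrArg Complex.im hsum
    simpa [Complex.add_im, Complex.mul_im] using this
  have hrel1 : γ₃ * detR (-z₃) z₂ = γ₁ * detR z₁ z₂ := by
    simp only [detR, Complex.neg_re, Complex.neg_im]
    linear_combination (-z₂.im) * hre + z₂.re * him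
  have hrel2 : γ₃ * detR z₁ (-z₃) = γ₂ * detR z₁ z₂ := by
    simp only [detR, Complex.neg_re, Complex.neg_im]
    linear_combination z₁.im * hre - z₁.re * him
  -- continuity
  set P : ℂ × ℂ × ℂ → ℝ := fun p => detR p.1 p.2.1 * detR (-p.2.2) p.2.1 with hP
  set Q : ℂ × ℂ × ℂ → ℝ := fun p => detR p.1 p.2.1 * detR p.1 (-p.2.2) with hQ
  have hPc : Continuous P := by unfold P; unfold detR; fun_prop
  have hQc : Continuous Q := by unfold Q; unfold detR; fun_prop
  have hd2 : 0 < detR z₁ z₂ ^ 2 := by positivity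
  have hPz : 0 < P (z₁, z₂, z₃) := by
    have : γ₃ * P (z₁, z₂, z₃) = γ₁ * detR z₁ z₂ ^ 2 := by
      simp only [hP]; linear_combination detR z₁ z₂ * hrel1
    nlinarith [this, mul_pos hγ1 hd2]
  have hQz : 0 < Q (z₁, z₂, z₃) := by
    have : γ₃ * Q (z₁, z₂, z₃) = γ₂ * detR z₁ z₂ ^ 2 := by
      simp only [hQ]; linear_combination detR z₁ z₂ * hrel2
    nlinarith [this, mul_pos hγ2 hd2]
  have hopen : IsOpen {p : ℂ × ℂ × ℂ | 0 < P p ∧ 0 < Q p} :=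
    (isOpen_lt continuous_const hPc).inter (isOpen_lt continuous_const hQc)
  obtain ⟨ε, hε, hball⟩ := Metric.mem_nhds_iff.mp (hopen.mem_nhds ⟨hPz, hQz⟩)
  refine ⟨ε, hε, fun u₁ u₂ u₃ h1 h2 h3 => ?_⟩
  have hmem : (u₁, u₂, u₃) ∈ Metric.ball ((z₁, z₂, z₃) : ℂ × ℂ × ℂ) ε := by
    simp only [Metric.mem_ball, Prod.dist_eq, dist_eq_norm]
    exact max_lt h1 (max_lt h2 h3)
  obtain ⟨hPu, hQu⟩ := hball hmem
  simp only [hP, hQ] at hPu hQu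
  set d : ℝ := detR u₁ u₂ with hdd
  have hd : d ≠ 0 := by
    intro h0
    rw [h0] at hPu; simp at hPu
  have hdC : (d : ℂ) ≠ 0 := Complex.ofReal_ne_zero.mpr hd
  set γ'₁ : ℝ := detR (-u₃) u₂ / d with hg1
  set γ'₂ : ℝ := detR u₁ (-u₃) / d with hg2
  have hγ'₁ : 0 < γ'₁ := by
    rw [hg1, div_pos_iff]
    rcases lt_or_gt_of_ne hd with h | h
    · right; constructor
      · nlinarith
      · exact h
    · left; exact ⟨by nlinarith, h⟩
  have hγ'₂ : 0 < γ'₂ := by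
    rw [hg2, div_pos_iff]
    rcases lt_or_gt_of_ne hd with h | h
    · right; exact ⟨by nlinarith, h⟩
    · left; exact ⟨by nlinarith, h⟩
  have hcomb : (γ'₁ : ℂ) * u₁ + (γ'₂ : ℂ) * u₂ + u₃ = 0 := by
    have := cramer_id u₁ u₂ (-u₃)
    rw [hg1, hg2]
    push_cast
    rw [div_mul_eq_mul_div, div_mul_eq_mul_div, ← add_div]
    rw [div_add' _ _ _ hdC, div_eq_zero_iff]
    left
    rw [← hdd] at this
    linear_combination -this
  intro w
  have hcr := cramer_id u₁ u₂ w
  rw [← hdd] at hcr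
  set a : ℝ := detR w u₂ / d with haa
  set b : ℝ := detR u₁ w / d with hbb
  have hab : w = (a : ℂ) * u₁ + (b : ℂ) * u₂ := by
    rw [haa, hbb]
    push_cast
    field_simp
    linear_combination hcr
  set t : ℝ := max 0 (max (-a / γ'₁) (-b / γ'₂)) with ht
  have ht0 : 0 ≤ t := le_max_left _ _
  have hta : 0 ≤ a + t * γ'₁ := by
    have h1 : -a / γ'₁ ≤ t := le_trans (le_max_left _ _) (le_max_right _ _)
    have := (div_le_iff₀ hγ'₁).mp h1
    linarith
  have htb : 0 ≤ b + t * γ'₂ := by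
    have h1 : -b / γ'₂ ≤ t := le_trans (le_max_right _ _) (le_max_right _ _)
    have := (div_le_iff₀ hγ'₂).mp h1
    linarith
  refine ⟨a + t * γ'₁, b + t * γ'₂, t, hta, htb, ht0, ?_⟩
  push_cast
  linear_combination hab - (t : ℂ) * hcomb

lemma span3_stable (z₁ z₂ z₃ : ℂ) (h : Span3 z₁ z₂ z₃) :
    ∃ ε > 0, ∀ u₁ u₂ u₃ : ℂ, ‖u₁ - z₁‖ < ε → ‖u₂ - z₂‖ < ε → ‖u₃ - z₃‖ < ε →
      Span3 u₁ u₂ u₃ := by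
  obtain ⟨β₁, β₂, β₃, hβ₁, hβ₂, hβ₃, hβ⟩ := h (-(z₁ + z₂ + z₃))
  have hγ : ((β₁ + 1 : ℝ) : ℂ) * z₁ + ((β₂ + 1 : ℝ) : ℂ) * z₂ + ((β₃ + 1 : ℝ) : ℂ) * z₃ = 0 := by
    push_cast
    linear_combination -hβ
  have hγ1 : (0:ℝ) < β₁ + 1 := by linarith
  have hγ2 : (0:ℝ) < β₂ + 1 := by linarith
  have hγ3 : (0:ℝ) < β₃ + 1 := by linarith
  -- find a nondegenerate pair
  have hpair : detR z₁ z₂ ≠ 0 ∨ detR z₁ z₃ ≠ 0 ∨ detR z₂ z₃ ≠ 0 := by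
    by_contra hcon
    push_neg at hcon
    obtain ⟨h12, h13, h23⟩ := hcon
    simp only [detR] at h12 h13 h23
    obtain ⟨a₁, a₂, a₃, _, _, _, ha⟩ := h 1
    obtain ⟨b₁, b₂, b₃, _, _, _, hb⟩ := h Complex.I
    have ea1 : a₁ * z₁.re + a₂ * z₂.re + a₃ * z₃.re = 1 := by
      have := congrArg Complex.re ha
      simp [Complex.add_re, Complex.mul_re] at this
      linarith
    have ea2 : a₁ * z₁.im + a₂ * z₂.im + a₃ * z₃.im = 0 := by
      have := congrArg Complex.im ha
      simp [Complex.add_im, Complex.mul_im] at this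
      linarith
    have eb1 : b₁ * z₁.re + b₂ * z₂.re + b₃ * z₃.re = 0 := by
      have := congrArg Complex.re hb
      simp [Complex.add_re, Complex.mul_re] at this
      linarith
    have eb2 : b₁ * z₁.im + b₂ * z₂.im + b₃ * z₃.im = 1 := by
      have := congrArg Complex.im hb
      simp [Complex.add_im, Complex.mul_im] at this
      linarith
    have key : (a₁ * z₁.re + a₂ * z₂.re + a₃ * z₃.re) * (b₁ * z₁.im + b₂ * z₂.im + b₃ * z₃.im)
        - (a₁ * z₁.im + a₂ * z₂.im + a₃ * z₃.im) * (b₁ * z₁.re + b₂ * z₂.re + b₃ * z₃.re)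
        = (a₁ * b₂ - a₂ * b₁) * (z₁.re * z₂.im - z₁.im * z₂.re)
        + (a₁ * b₃ - a₃ * b₁) * (z₁.re * z₃.im - z₁.im * z₃.re)
        + (a₂ * b₃ - a₃ * b₂) * (z₂.re * z₃.im - z₂.im * z₃.re) := by ring
    rw [ea1, ea2, eb1, eb2, h12, h13, h23] at key
    norm_num at key
  rcases hpair with h12 | h13 | h23
  · obtain ⟨ε, hε, hP⟩ := span3_perturb z₁ z₂ z₃ h12 _ _ _ hγ1 hγ2 hγ3 hγ
    exact ⟨ε, hε, hP⟩
  · obtain ⟨ε, hε, hP⟩ := span3_perturb z₁ z₃ z₂ h13 (β₁+1) (β₃+1) (β₂+1) hγ1 hγ3 hγ2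
      (by linear_combination hγ)
    refine ⟨ε, hε, fun u₁ u₂ u₃ h1 h2 h3 w => ?_⟩
    obtain ⟨a, b, c, ha, hb, hc, hw⟩ := hP u₁ u₃ u₂ h1 h3 h2 w
    exact ⟨a, c, b, ha, hc, hb, by linear_combination hw⟩
  · obtain ⟨ε, hε, hP⟩ := span3_perturb z₂ z₃ z₁ h23 (β₂+1) (β₃+1) (β₁+1) hγ2 hγ3 hγ1
      (by linear_combination hγ)
    refine ⟨ε, hε, fun u₁ u₂ u₃ h1 h2 h3 w => ?_⟩
    obtain ⟨a, b, c, ha, hb, hc, hw⟩ := hP u₂ u₃ u₁ h2 h3 h1 w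
    exact ⟨c, a, b, hc, ha, hb, by linear_combination hw⟩

lemma monotone_expNegInvGlue : Monotone expNegInvGlue := by
  intro x y hxy
  rcases le_or_gt x 0 with h | h
  · rw [expNegInvGlue.zero_of_nonpos h]; exact expNegInvGlue.nonneg y
  · have hy : 0 < y := lt_of_lt_of_le h hxy
    simp only [expNegInvGlue, not_le.2 h, not_le.2 hy, if_false]
    apply Real.exp_le_exp.2
    have : y⁻¹ ≤ x⁻¹ := by gcongr
    linarith

lemma monotone_smoothTransition_aux : Monotone Real.smoothTransition := by
  intro x y hxy
  have h1 : expNegInvGlue x ≤ expNegInvGlue y := monotone_expNegInvGlue hxy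
  have h2 : expNegInvGlue (1 - y) ≤ expNegInvGlue (1 - x) :=
    monotone_expNegInvGlue (by linarith)
  have hx0 := expNegInvGlue.nonneg x
  have hy0 := expNegInvGlue.nonneg (1 - y)
  show expNegInvGlue x / (expNegInvGlue x + expNegInvGlue (1 - x)) ≤
    expNegInvGlue y / (expNegInvGlue y + expNegInvGlue (1 - y))
  rw [div_le_div_iff₀ (Real.smoothTransition.pos_denom x) (Real.smoothTransition.pos_denom y)]
  nlinarith [mul_le_mul h1 h2 hy0 (expNegInvGlue.nonneg y)]

lemma monotone_deriv_nonneg_aux {f : ℝ → ℝ} (hf : Monotone f) (x : ℝ) : 0 ≤ deriv f x := by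
  by_cases hd : DifferentiableAt ℝ f x
  · have h := hd.hasDerivAt
    rw [hasDerivAt_iff_tendsto_slope] at h
    have h' : Tendsto (slope f x) (nhdsWithin x (Ioi x)) (nhds (deriv f x)) :=
      h.mono_left (nhdsWithin_mono x fun y hy => ne_of_gt hy)
    refine ge_of_tendsto h' ?_
    filter_upwards [self_mem_nhdsWithin] with y hy
    rw [slope_def_field]
    exact div_nonneg (by simpa using sub_nonneg.2 (hf (le_of_lt (mem_Ioi.mp hy)))) (by simpa using sub_nonneg.2 (le_of_lt (mem_Ioi.mp hy)))
  · rw [deriv_zero_of_not_differentiableAt hd]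

lemma bump_exists (t₀ ε K : ℝ) (ht₀ : 0 < t₀) (hε : 0 < ε) (g : ℝ → ℂ)
    (hg : ContinuousAt g t₀) (hgm : ContinuousOn g (Ioi (0:ℝ)))
    (hK : ∀ t, 0 ≤ t → ‖g t‖ ≤ K * Real.exp (-t)) :
    ∃ H : ℝ → ℝ, ContDiff ℝ (⊤ : ℕ∞) H ∧ (∀ t, 0 ≤ deriv H t) ∧
      (∀ t, 0 ≤ H t) ∧ (∀ t, H t ≤ 1) ∧ (∀ t, t ≤ 0 → H t = 0) ∧
      (∀ t, t₀ + 1 ≤ t → H t = 1) ∧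
      IntegrableOn (fun t => deriv H t • g t) (Ioi (0:ℝ)) ∧
      ‖(∫ t in Ioi (0:ℝ), deriv H t • g t) - g t₀‖ < ε := by
  obtain ⟨δc, hδc, hclose⟩ := Metric.continuousAt_iff.mp hg (ε/2) (by positivity)
  set δ : ℝ := min (δc/2) 1 with hδdef
  have hδ0 : 0 < δ := lt_min (by positivity) one_pos
  have hδ1 : δ ≤ 1 := min_le_right _ _
  have hnear : ∀ t, t₀ ≤ t → t ≤ t₀ + δ → ‖g t - g t₀‖ ≤ ε/2 := by
    intro t h1 h2
    have : dist t t₀ < δc := by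
      rw [Real.dist_eq, abs_of_nonneg (by linarith)]
      have : δ ≤ δc/2 := min_le_left _ _
      linarith
    have := hclose this
    rw [dist_eq_norm] at this
    linarith
  set H : ℝ → ℝ := fun t => Real.smoothTransition ((t - t₀)/δ) with hHdef
  have Hsmooth : ContDiff ℝ (⊤ : ℕ∞) H :=
    Real.smoothTransition.contDiff.comp ((contDiff_id.sub contDiff_const).div_const δ)
  have Hmono : Monotone H := fun a b hab =>
    monotone_smoothTransition_aux ((div_le_div_iff_of_pos_right hδ0).mpr (by linarith))
  have hH0 : ∀ t, t ≤ t₀ → H t = 0 := fun t ht =>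
    Real.smoothTransition.zero_of_nonpos (div_nonpos_of_nonpos_of_nonneg (by linarith) hδ0.le)
  have hH1 : ∀ t, t₀ + δ ≤ t → H t = 1 := fun t ht =>
    Real.smoothTransition.one_of_one_le ((le_div_iff₀ hδ0).mpr (by linarith))
  have hHnn : ∀ t, 0 ≤ H t := fun t => Real.smoothTransition.nonneg _
  have hHle : ∀ t, H t ≤ 1 := fun t => Real.smoothTransition.le_one _
  set b : ℝ → ℝ := deriv H with hbdef
  have hb0 : ∀ t, 0 ≤ b t := monotone_deriv_nonneg_aux Hmono
  have hblt : ∀ t, t < t₀ → b t = 0 := by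
    intro t ht
    have hev : H =ᶠ[nhds t] fun _ => (0:ℝ) :=
      eventually_of_mem (Iio_mem_nhds ht) fun s hs => hH0 s (le_of_lt hs)
    rw [hbdef, hev.deriv_eq, deriv_const]
  have hbgt : ∀ t, t₀ + δ < t → b t = 0 := by
    intro t ht
    have hev : H =ᶠ[nhds t] fun _ => (1:ℝ) :=
      eventually_of_mem (Ioi_mem_nhds ht) fun s hs => hH1 s (le_of_lt hs)
    rw [hbdef, hev.deriv_eq, deriv_const]
  have Hdiff : Differentiable ℝ H := (contDiff_infty_iff_deriv.mp Hsmooth).1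
  have hbcont : Continuous b := ((contDiff_infty_iff_deriv.mp Hsmooth).2).continuous
  have hbsupp : HasCompactSupport b := by
    apply HasCompactSupport.intro (isCompact_Icc (a := t₀) (b := t₀ + δ))
    intro t ht
    rw [Set.mem_Icc, not_and_or] at ht
    rcases ht with h | h
    · exact hblt t (not_le.mp h)
    · exact hbgt t (not_le.mp h)
  have hbint : Integrable b := hbcont.integrable_of_hasCompactSupport hbsupp
  obtain ⟨tM, htM⟩ := hbcont.exists_forall_ge_of_hasCompactSupport hbsupp
  set M : ℝ := b tM with hMdef
  have hM0 : 0 ≤ M := hb0 tM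
  have hK0 : 0 ≤ K := by
    have h3 := hK 0 le_rfl
    rw [neg_zero, Real.exp_zero, mul_one] at h3
    linarith [norm_nonneg (g 0)]
  have hexpint : IntegrableOn (fun t => Real.exp (-t)) (Ioi (0:ℝ)) := by
    simpa using exp_neg_integrableOn_Ioi 0 one_pos
  have hbg_meas : AEStronglyMeasurable (fun t => b t • g t) (volume.restrict (Ioi (0:ℝ))) :=
    (hbcont.continuousOn.smul hgm).aestronglyMeasurable measurableSet_Ioi
  have hbgint : IntegrableOn (fun t => b t • g t) (Ioi (0:ℝ)) := by
    apply Integrable.mono' (hexpint.const_mul (M * K)) hbg_meas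
    refine (ae_restrict_iff' measurableSet_Ioi).mpr (ae_of_all _ fun t ht => ?_)
    rw [norm_smul, Real.norm_eq_abs, abs_of_nonneg (hb0 t)]
    calc b t * ‖g t‖ ≤ M * (K * Real.exp (-t)) :=
          mul_le_mul (htM t) (hK t (le_of_lt ht)) (norm_nonneg _) hM0
      _ = M * K * Real.exp (-t) := by ring
  -- integral of b over Ioi 0 is 1
  have hone : ∫ t in Ioi (0:ℝ), b t = 1 := by
    have c1 : ∫ t in Ioi (0:ℝ), b t = ∫ t, b t :=
      setIntegral_eq_integral_of_forall_compl_eq_zero fun t ht =>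
        hblt t (lt_of_le_of_lt (by simpa using ht) ht₀)
    have c2 : ∫ t in Ioc (0:ℝ) (t₀ + δ + 1), b t = ∫ t, b t := by
      apply setIntegral_eq_integral_of_forall_compl_eq_zero
      intro t ht
      rw [Set.mem_Ioc, not_and_or] at ht
      rcases ht with h | h
      · exact hblt t (lt_of_le_of_lt (not_lt.mp h) ht₀)
      · exact hbgt t (by linarith [not_le.mp h])
    have c3 : ∫ t in (0:ℝ)..(t₀ + δ + 1), b t = ∫ t in Ioc (0:ℝ) (t₀ + δ + 1), b t :=
      intervalIntegral.integral_of_le (by linarith)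
    have c4 : ∫ t in (0:ℝ)..(t₀ + δ + 1), b t = H (t₀ + δ + 1) - H 0 :=
      intervalIntegral.integral_deriv_eq_sub (fun x _ => Hdiff.differentiableAt)
        (hbcont.intervalIntegrable 0 (t₀ + δ + 1))
    rw [c1, ← c2, ← c3, c4, hH1 _ (by linarith), hH0 0 (le_of_lt ht₀)]
    norm_num
  have hconst : ∫ t in Ioi (0:ℝ), b t • g t₀ = g t₀ := by
    rw [integral_smul_const, hone, one_smul]
  have hsub : (∫ t in Ioi (0:ℝ), b t • g t) - g t₀
      = ∫ t in Ioi (0:ℝ), (b t • g t - b t • g t₀) := by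
    rw [integral_sub hbgint (hbint.integrableOn.smul_const _), hconst]
  have hptwise : ∀ t, ‖b t • g t - b t • g t₀‖ ≤ b t * (ε/2) := by
    intro t
    rw [← smul_sub, norm_smul, Real.norm_eq_abs, abs_of_nonneg (hb0 t)]
    by_cases hmem : t₀ ≤ t ∧ t ≤ t₀ + δ
    · exact mul_le_mul_of_nonneg_left (hnear t hmem.1 hmem.2) (hb0 t)
    · rcases not_and_or.mp hmem with h | h
      · rw [hblt t (not_le.mp h)]; simp
      · rw [hbgt t (not_le.mp h)]; simp
  have hnorm : ‖∫ t in Ioi (0:ℝ), (b t • g t - b t • g t₀)‖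
      ≤ ∫ t in Ioi (0:ℝ), b t * (ε/2) := by
    apply norm_integral_le_of_norm_le (hbint.integrableOn.mul_const _)
    exact ae_of_all _ fun t => hptwise t
  have hval : ∫ t in Ioi (0:ℝ), b t * (ε/2) = ε/2 := by
    rw [integral_mul_const, hone, one_mul]
  refine ⟨H, Hsmooth, hb0, hHnn, hHle, fun t ht => hH0 t (by linarith), fun t ht => hH1 t (by linarith), hbgint, ?_⟩
  · rw [hsub]
    calc ‖∫ t in Ioi (0:ℝ), (b t • g t - b t • g t₀)‖ ≤ ε/2 := by rw [← hval]; exact hnorm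
      _ < ε := by linarith


/-- Lemma (construction of a shear flow concentrated on spanning directions). -/
theorem shear_flow_construction (μ : ℂ) (hμ : μ.im ≠ 0)
    (φ : ℝ → ℂ) (hφ : ContinuousOn φ (Icc (0:ℝ) 1))
    (x₁ x₂ x₃ : ℝ) (h1 : 0 ≤ x₁) (h12 : x₁ < x₂) (h23 : x₂ < x₃) (h3 : x₃ ≤ 1)
    (hspan : {z : ℂ | ∃ α₁ α₂ α₃ : ℝ, 0 ≤ α₁ ∧ 0 ≤ α₂ ∧ 0 ≤ α₃ ∧
        z = (α₁ : ℂ) * φ x₁ + (α₂ : ℂ) * φ x₂ + (α₃ : ℂ) * φ x₃} = Set.univ) :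
    ∃ U : ℝ → ℝ, ContDiff ℝ (⊤ : ℕ∞) U ∧ StrictMonoOn U (Ici 0) ∧ U 0 = 0 ∧
      (∀ y, 0 ≤ y → U y ∈ Ico (0:ℝ) 1) ∧
      (∃ C : ℝ, 0 < C ∧ ∃ y₀ : ℝ, ∀ y, y₀ ≤ y → 1 - U y = C * Real.exp (-y)) ∧
      ∫ y in Ioi (0:ℝ),
        (((1 - U y) / ‖μ - (U y : ℂ)‖ ^ 4 : ℝ) : ℂ) * φ (U y) = 0 := by
  -- basic positivity facts
  have him : ∀ u : ℝ, |μ.im| ≤ ‖μ - (u : ℂ)‖ := by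
    intro u
    have h1 : |(μ - (u:ℂ)).im| ≤ ‖μ - (u:ℂ)‖ := Complex.abs_im_le_norm _
    simpa using h1
  have him0 : 0 < |μ.im| := abs_pos.mpr hμ
  have hden : ∀ u : ℝ, 0 < ‖μ - (u : ℂ)‖ := fun u => lt_of_lt_of_le him0 (him u)
  set h : ℝ → ℂ := fun u => (((1 - u) / ‖μ - (u : ℂ)‖ ^ 4 : ℝ) : ℂ) * φ u with hhdef
  -- Span of the original three directions
  have hsp0 : Span3 (φ x₁) (φ x₂) (φ x₃) := fun w => (Set.eq_univ_iff_forall.mp hspan) w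
  obtain ⟨ε₀, hε₀0, hst0⟩ := span3_stable _ _ _ hsp0
  -- pick interior points close to the xᵢ
  have hpick : ∀ x ∈ Icc (0:ℝ) 1, ∃ x', x' ∈ Ioo (0:ℝ) 1 ∧ ‖φ x' - φ x‖ < ε₀ := by
    intro x hx
    have hc : ContinuousWithinAt φ (Icc (0:ℝ) 1) x := hφ x hx
    have hev : ∀ᶠ u in nhdsWithin x (Icc (0:ℝ) 1), dist (φ u) (φ x) < ε₀ :=
      Metric.tendsto_nhds.mp hc ε₀ hε₀0
    have hev' : ∀ᶠ u in nhdsWithin x (Ioo (0:ℝ) 1), dist (φ u) (φ x) < ε₀ :=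
      hev.filter_mono (nhdsWithin_mono x Ioo_subset_Icc_self)
    have hne : (nhdsWithin x (Ioo (0:ℝ) 1)).NeBot := by
      rw [← mem_closure_iff_nhdsWithin_neBot, closure_Ioo (by norm_num : (0:ℝ) ≠ 1)]
      exact hx
    obtain ⟨x', hx'1, hx'2⟩ := (hev'.and self_mem_nhdsWithin).exists
    exact ⟨x', hx'2, by rwa [dist_eq_norm] at hx'1⟩
  obtain ⟨x'₁, hx'₁, hφ1⟩ := hpick x₁ ⟨h1, by linarith⟩
  obtain ⟨x'₂, hx'₂, hφ2⟩ := hpick x₂ ⟨by linarith, by linarith⟩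
  obtain ⟨x'₃, hx'₃, hφ3⟩ := hpick x₃ ⟨by linarith, h3⟩
  have hsp1 : Span3 (φ x'₁) (φ x'₂) (φ x'₃) := hst0 _ _ _ hφ1 hφ2 hφ3
  -- scale by the positive weights
  have hc1 : 0 < (1 - x'₁) / ‖μ - (x'₁ : ℂ)‖ ^ 4 := by
    apply div_pos (by linarith [hx'₁.2]) (pow_pos (hden _) 4)
  have hc2 : 0 < (1 - x'₂) / ‖μ - (x'₂ : ℂ)‖ ^ 4 := by
    apply div_pos (by linarith [hx'₂.2]) (pow_pos (hden _) 4)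
  have hc3 : 0 < (1 - x'₃) / ‖μ - (x'₃ : ℂ)‖ ^ 4 := by
    apply div_pos (by linarith [hx'₃.2]) (pow_pos (hden _) 4)
  have hsp2 : Span3 (h x'₁) (h x'₂) (h x'₃) := span3_scale hsp1 hc1 hc2 hc3
  obtain ⟨ε₁, hε₁0, hst1⟩ := span3_stable _ _ _ hsp2
  -- the associated times
  set t₁ : ℝ := -Real.log (1 - x'₁) with ht₁def
  set t₂ : ℝ := -Real.log (1 - x'₂) with ht₂def
  set t₃ : ℝ := -Real.log (1 - x'₃) with ht₃def
  have ht₁pos : 0 < t₁ := by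
    rw [ht₁def, neg_pos]; exact Real.log_neg (by linarith [hx'₁.2]) (by linarith [hx'₁.1])
  have ht₂pos : 0 < t₂ := by
    rw [ht₂def, neg_pos]; exact Real.log_neg (by linarith [hx'₂.2]) (by linarith [hx'₂.1])
  have ht₃pos : 0 < t₃ := by
    rw [ht₃def, neg_pos]; exact Real.log_neg (by linarith [hx'₃.2]) (by linarith [hx'₃.1])
  have hU0t : ∀ x' : ℝ, 0 < x' → x' < 1 → 1 - Real.exp (-(-Real.log (1 - x'))) = x' := by
    intro x' hx0 hx1
    rw [neg_neg, Real.exp_log (by linarith)]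
    ring
  have hU0t₁ : 1 - Real.exp (-t₁) = x'₁ := hU0t x'₁ hx'₁.1 hx'₁.2
  have hU0t₂ : 1 - Real.exp (-t₂) = x'₂ := hU0t x'₂ hx'₂.1 hx'₂.2
  have hU0t₃ : 1 - Real.exp (-t₃) = x'₃ := hU0t x'₃ hx'₃.1 hx'₃.2
  set g : ℝ → ℂ := fun t => h (1 - Real.exp (-t)) with hgdef
  -- bound for φ
  obtain ⟨Mφ, hMφ⟩ := isCompact_Icc.exists_bound_of_continuousOn hφ
  set Mφ' : ℝ := max Mφ 0 with hMφ'def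
  set K : ℝ := Mφ' / |μ.im| ^ 4 with hKdef
  have hmemIcc : ∀ t : ℝ, 0 ≤ t → (1 - Real.exp (-t)) ∈ Icc (0:ℝ) 1 := by
    intro t ht
    constructor
    · have : Real.exp (-t) ≤ 1 := Real.exp_le_one_iff.mpr (by linarith)
      linarith
    · have : 0 < Real.exp (-t) := Real.exp_pos _
      linarith
  have hgK : ∀ t, 0 ≤ t → ‖g t‖ ≤ K * Real.exp (-t) := by
    intro t ht
    have hu := hmemIcc t ht
    set u : ℝ := 1 - Real.exp (-t) with hudef
    have hgu : g t = (((1 - u) / ‖μ - (u : ℂ)‖ ^ 4 : ℝ) : ℂ) * φ u := rfl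
    rw [hgu, norm_mul, Complex.norm_real, Real.norm_eq_abs]
    have h1u : 1 - u = Real.exp (-t) := by rw [hudef]; ring
    have hnn : 0 ≤ (1 - u) / ‖μ - (u : ℂ)‖ ^ 4 := by
      apply div_nonneg (by rw [h1u]; positivity) (by positivity)
    rw [abs_of_nonneg hnn, h1u]
    have hb1 : Real.exp (-t) / ‖μ - (u : ℂ)‖ ^ 4 ≤ Real.exp (-t) / |μ.im| ^ 4 := by
      gcongr
      exact him u
    have hb2 : ‖φ u‖ ≤ Mφ' := le_trans (hMφ u hu) (le_max_left _ _)
    calc Real.exp (-t) / ‖μ - (u : ℂ)‖ ^ 4 * ‖φ u‖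
        ≤ Real.exp (-t) / |μ.im| ^ 4 * Mφ' :=
          mul_le_mul hb1 hb2 (norm_nonneg _) (by positivity)
      _ = K * Real.exp (-t) := by rw [hKdef]; ring
  -- continuity of g
  have hfaccont : Continuous (fun u : ℝ => (((1 - u) / ‖μ - (u : ℂ)‖ ^ 4 : ℝ) : ℂ)) := by
    apply Complex.continuous_ofReal.comp
    apply Continuous.div (by fun_prop)
    · fun_prop
    · intro u; exact ne_of_gt (pow_pos (hden u) 4)
  have hU₀cont : Continuous (fun t : ℝ => 1 - Real.exp (-t)) := by fun_prop
  have hgm : ContinuousOn g (Ioi (0:ℝ)) := by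
    apply ContinuousOn.mul (hfaccont.comp hU₀cont).continuousOn
    apply ContinuousOn.comp hφ hU₀cont.continuousOn
    intro t ht
    exact hmemIcc t (le_of_lt ht)
  have hgt : ∀ x' t' : ℝ, x' ∈ Ioo (0:ℝ) 1 → 1 - Real.exp (-t') = x' → ContinuousAt g t' := by
    intro x' t' hx' hxt
    have hφat : ContinuousAt φ x' := hφ.continuousAt (Icc_mem_nhds hx'.1 hx'.2)
    have hhat : ContinuousAt h x' := ((hfaccont.continuousAt).mul hφat)
    have : ContinuousAt h (1 - Real.exp (-t')) := by rw [hxt]; exact hhat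
    have hcomp := ContinuousAt.comp (g := h) (f := fun t : ℝ => 1 - Real.exp (-t))
      (x := t') this hU₀cont.continuousAt
    exact hcomp
  -- the three bumps
  obtain ⟨H₁, hH₁s, hb₁0, hH₁nn, hH₁le, hH₁z, hH₁o, hw₁int, hw₁cl⟩ :=
    bump_exists t₁ ε₁ K ht₁pos hε₁0 g (hgt x'₁ t₁ hx'₁ hU0t₁) hgm hgK
  obtain ⟨H₂, hH₂s, hb₂0, hH₂nn, hH₂le, hH₂z, hH₂o, hw₂int, hw₂cl⟩ :=
    bump_exists t₂ ε₁ K ht₂pos hε₁0 g (hgt x'₂ t₂ hx'₂ hU0t₂) hgm hgK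
  obtain ⟨H₃, hH₃s, hb₃0, hH₃nn, hH₃le, hH₃z, hH₃o, hw₃int, hw₃cl⟩ :=
    bump_exists t₃ ε₁ K ht₃pos hε₁0 g (hgt x'₃ t₃ hx'₃ hU0t₃) hgm hgK
  set w₁ : ℂ := ∫ t in Ioi (0:ℝ), deriv H₁ t • g t with hw₁def
  set w₂ : ℂ := ∫ t in Ioi (0:ℝ), deriv H₂ t • g t with hw₂def
  set w₃ : ℂ := ∫ t in Ioi (0:ℝ), deriv H₃ t • g t with hw₃def
  have hgt₁ : g t₁ = h x'₁ := by rw [hgdef]; simp only; rw [hU0t₁]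
  have hgt₂ : g t₂ = h x'₂ := by rw [hgdef]; simp only; rw [hU0t₂]
  have hgt₃ : g t₃ = h x'₃ := by rw [hgdef]; simp only; rw [hU0t₃]
  have hspw : Span3 w₁ w₂ w₃ := by
    apply hst1 <;> [skip; skip; skip] <;>
      [rw [← hgt₁]; rw [← hgt₂]; rw [← hgt₃]]
    · exact hw₁cl
    · exact hw₂cl
    · exact hw₃cl
  -- integrability of g
  have hexpint : IntegrableOn (fun t => Real.exp (-t)) (Ioi (0:ℝ)) := by
    simpa using exp_neg_integrableOn_Ioi 0 one_pos
  have hgint : IntegrableOn g (Ioi (0:ℝ)) := by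
    apply Integrable.mono' (hexpint.const_mul K)
      (hgm.aestronglyMeasurable measurableSet_Ioi)
    refine (ae_restrict_iff' measurableSet_Ioi).mpr (ae_of_all _ fun t ht => ?_)
    exact hgK t (le_of_lt ht)
  set I₀ : ℂ := ∫ t in Ioi (0:ℝ), g t with hI₀def
  obtain ⟨α₁, α₂, α₃, hα₁, hα₂, hα₃, hαsum⟩ := hspw (-I₀)
  -- the reparametrization T
  have hH₁d : Differentiable ℝ H₁ := (contDiff_infty_iff_deriv.mp hH₁s).1
  have hH₂d : Differentiable ℝ H₂ := (contDiff_infty_iff_deriv.mp hH₂s).1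
  have hH₃d : Differentiable ℝ H₃ := (contDiff_infty_iff_deriv.mp hH₃s).1
  set T : ℝ → ℝ := fun t => t + (α₁ * H₁ t + α₂ * H₂ t + α₃ * H₃ t) with hTdef
  set T' : ℝ → ℝ := fun t => 1 + (α₁ * deriv H₁ t + α₂ * deriv H₂ t + α₃ * deriv H₃ t)
    with hT'def
  have hTd : ∀ t, HasDerivAt T (T' t) t := by
    intro t
    exact (hasDerivAt_id t).add
      ((((hH₁d t).hasDerivAt.const_mul α₁).add ((hH₂d t).hasDerivAt.const_mul α₂)).add
        ((hH₃d t).hasDerivAt.const_mul α₃))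
  have hT'pos : ∀ t, 0 < T' t := by
    intro t
    have e1 := mul_nonneg hα₁ (hb₁0 t)
    have e2 := mul_nonneg hα₂ (hb₂0 t)
    have e3 := mul_nonneg hα₃ (hb₃0 t)
    simp only [hT'def]
    linarith
  have hTmono : StrictMono T :=
    strictMono_of_deriv_pos (fun t => by rw [(hTd t).deriv]; exact hT'pos t)
  have hT0 : T 0 = 0 := by
    simp only [hTdef]
    rw [hH₁z 0 le_rfl, hH₂z 0 le_rfl, hH₃z 0 le_rfl]
    ring
  have hTcont : Continuous T := continuous_iff_continuousAt.mpr fun t => (hTd t).continuousAt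
  have hTsurj : Function.Surjective T := by
    intro y
    have hA0 : 0 ≤ α₁ + α₂ + α₃ := by linarith
    have hTyA : T (y - (α₁ + α₂ + α₃)) ≤ y := by
      have e1 := mul_le_of_le_one_right hα₁ (hH₁le (y - (α₁ + α₂ + α₃)))
      have e2 := mul_le_of_le_one_right hα₂ (hH₂le (y - (α₁ + α₂ + α₃)))
      have e3 := mul_le_of_le_one_right hα₃ (hH₃le (y - (α₁ + α₂ + α₃)))
      simp only [hTdef]
      linarith
    have hTy : y ≤ T y := by
      have e1 := mul_nonneg hα₁ (hH₁nn y)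
      have e2 := mul_nonneg hα₂ (hH₂nn y)
      have e3 := mul_nonneg hα₃ (hH₃nn y)
      simp only [hTdef]
      linarith
    obtain ⟨t, _, hTt⟩ := intermediate_value_Icc (by linarith : y - (α₁ + α₂ + α₃) ≤ y)
      hTcont.continuousOn ⟨hTyA, hTy⟩
    exact ⟨t, hTt⟩
  set e := StrictMono.orderIsoOfSurjective T hTmono hTsurj with hedef
  set S : ℝ → ℝ := fun y => e.symm y with hSdef
  have hTS : ∀ y, T (S y) = y := fun y => e.apply_symm_apply y
  have hST : ∀ t, S (T t) = t := fun t => e.symm_apply_apply t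
  have hScont : Continuous S := e.symm.continuous
  have hSmono : StrictMono S := fun a b hab => e.symm.strictMono hab
  have hS0 : S 0 = 0 := by
    have := hST 0
    rwa [hT0] at this
  have hSnn : ∀ y, 0 ≤ y → 0 ≤ S y := by
    intro y hy
    have : S 0 ≤ S y := hSmono.monotone hy
    rwa [hS0] at this
  have hSd : ∀ y, HasDerivAt S (T' (S y))⁻¹ y := fun y =>
    HasDerivAt.of_local_left_inverse hScont.continuousAt (hTd (S y)) (ne_of_gt (hT'pos _))
      (Filter.Eventually.of_forall hTS)
  have hT's : ContDiff ℝ (⊤ : ℕ∞) T' := by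
    have d1 : ContDiff ℝ (⊤ : ℕ∞) (deriv H₁) := (contDiff_infty_iff_deriv.mp hH₁s).2
    have d2 : ContDiff ℝ (⊤ : ℕ∞) (deriv H₂) := (contDiff_infty_iff_deriv.mp hH₂s).2
    have d3 : ContDiff ℝ (⊤ : ℕ∞) (deriv H₃) := (contDiff_infty_iff_deriv.mp hH₃s).2
    exact contDiff_const.add (((contDiff_const.mul d1).add (contDiff_const.mul d2)).add
      (contDiff_const.mul d3))
  have hSn : ∀ n : ℕ, ContDiff ℝ n S := by
    intro n
    induction n with
    | zero => exact contDiff_zero.mpr hScont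
    | succ n ih =>
      have hder : deriv S = fun y => (T' (S y))⁻¹ := funext fun y => (hSd y).deriv
      rw [Nat.cast_succ]
      apply contDiff_succ_iff_deriv.mpr
      refine ⟨fun y => (hSd y).differentiableAt, ?_, ?_⟩
      · intro hcon
        simp at hcon
      · rw [hder]
        have hcomp : ContDiff ℝ n (fun y => T' (S y)) :=
          (hT's.of_le (by exact_mod_cast le_top)).comp ih
        exact hcomp.inv fun y => ne_of_gt (hT'pos (S y))
  have hSsm : ContDiff ℝ (⊤ : ℕ∞) S := contDiff_infty.mpr hSn
  set U : ℝ → ℝ := fun y => 1 - Real.exp (-(S y)) with hUdef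
  refine ⟨U, ?_, ?_, ?_, ?_, ?_, ?_⟩
  · exact contDiff_const.sub (Real.contDiff_exp.comp hSsm.neg)
  · intro y1 _ y2 _ hlt
    simp only [hUdef]
    have h1 := hSmono hlt
    have h2 := Real.exp_lt_exp.mpr (neg_lt_neg h1)
    linarith
  · simp only [hUdef]
    rw [hS0]
    simp
  · intro y hy
    constructor
    · have : Real.exp (-(S y)) ≤ 1 := Real.exp_le_one_iff.mpr (by linarith [hSnn y hy])
      simp only [hUdef]
      linarith
    · have : 0 < Real.exp (-(S y)) := Real.exp_pos _
      simp only [hUdef]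
      linarith
  · -- exponential tail
    refine ⟨Real.exp (α₁ + α₂ + α₃), Real.exp_pos _,
      max (t₁ + 1) (max (t₂ + 1) (t₃ + 1)) + (α₁ + α₂ + α₃), ?_⟩
    intro y hy
    have hyR1 : t₁ + 1 ≤ y - (α₁ + α₂ + α₃) := by
      have := le_max_left (t₁ + 1) (max (t₂ + 1) (t₃ + 1))
      linarith
    have hyR2 : t₂ + 1 ≤ y - (α₁ + α₂ + α₃) := by
      have h' := le_trans (le_max_left (t₂ + 1) (t₃ + 1)) (le_max_right (t₁ + 1) _)
      linarith
    have hyR3 : t₃ + 1 ≤ y - (α₁ + α₂ + α₃) := by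
      have h' := le_trans (le_max_right (t₂ + 1) (t₃ + 1)) (le_max_right (t₁ + 1) _)
      linarith
    have hTy : T (y - (α₁ + α₂ + α₃)) = y := by
      simp only [hTdef]
      rw [hH₁o _ hyR1, hH₂o _ hyR2, hH₃o _ hyR3]
      ring
    have hSy : S y = y - (α₁ + α₂ + α₃) := by
      conv_lhs => rw [← hTy]
      exact hST _
    simp only [hUdef]
    rw [hSy, show -(y - (α₁ + α₂ + α₃)) = (α₁ + α₂ + α₃) + -y by ring, Real.exp_add]
    ring
  · -- the vanishing integral
    show ∫ y in Ioi (0:ℝ), h (U y) = 0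
    have himg : T '' Ioi (0:ℝ) = Ioi (0:ℝ) := by
      ext y
      constructor
      · rintro ⟨t, ht, rfl⟩
        have : T 0 < T t := hTmono ht
        rwa [hT0] at this
      · intro hy
        refine ⟨S y, ?_, hTS y⟩
        have : S 0 < S y := hSmono hy
        rwa [hS0] at this
    have hsub := integral_image_eq_integral_abs_deriv_smul (s := Ioi (0:ℝ)) (f := T)
      (f' := T') measurableSet_Ioi (fun t _ => (hTd t).hasDerivWithinAt)
      hTmono.injective.injOn (fun y => h (U y))
    rw [himg] at hsub
    have hUT : ∀ t, U (T t) = 1 - Real.exp (-t) := by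
      intro t
      simp only [hUdef]
      rw [hST]
    have hrw : ∀ t : ℝ, |T' t| • h (U (T t))
        = g t + α₁ • (deriv H₁ t • g t) + α₂ • (deriv H₂ t • g t) + α₃ • (deriv H₃ t • g t) := by
      intro t
      rw [abs_of_pos (hT'pos t), hUT t]
      show T' t • g t = _
      simp only [hT'def, smul_smul, add_smul, one_smul]
      abel
    have hf2 : IntegrableOn (fun t => α₁ • (deriv H₁ t • g t)) (Ioi (0:ℝ)) := hw₁int.smul α₁
    have hf3 : IntegrableOn (fun t => α₂ • (deriv H₂ t • g t)) (Ioi (0:ℝ)) := hw₂int.smul α₂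
    have hf4 : IntegrableOn (fun t => α₃ • (deriv H₃ t • g t)) (Ioi (0:ℝ)) := hw₃int.smul α₃
    calc ∫ y in Ioi (0:ℝ), h (U y)
        = ∫ t in Ioi (0:ℝ), |T' t| • h (U (T t)) := hsub
      _ = ∫ t in Ioi (0:ℝ), (g t + α₁ • (deriv H₁ t • g t) + α₂ • (deriv H₂ t • g t)
            + α₃ • (deriv H₃ t • g t)) := by simp only [hrw]
      _ = I₀ + α₁ • w₁ + α₂ • w₂ + α₃ • w₃ := by
          have hi1 : IntegrableOn (fun t => g t + α₁ • (deriv H₁ t • g t)) (Ioi (0:ℝ)) :=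
            hgint.add hf2
          have hi2 : IntegrableOn
              (fun t => g t + α₁ • (deriv H₁ t • g t) + α₂ • (deriv H₂ t • g t))
              (Ioi (0:ℝ)) := hi1.add hf3
          rw [integral_add hi2 hf4, integral_add hi1 hf3, integral_add hgint hf2,
            integral_smul, integral_smul, integral_smul]
      _ = I₀ + ((α₁ : ℂ) * w₁ + (α₂ : ℂ) * w₂ + (α₃ : ℂ) * w₃) := by
          rw [Complex.real_smul, Complex.real_smul, Complex.real_smul]
          ring
      _ = I₀ + -I₀ := by rw [← hαsum]
      _ = 0 := by ring

end
end

section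
/- Let U_s be an admissible shear flow. Then for every μ ∈ ℂ ∖ [0,1], Φ_inv(μ) = 1/(μ U_s'(0)) + ∫₀¹ g(u)/(u − μ) du, where g(u) := (1−u)² U_s''(U_s⁻¹(u)) / (U_s'(U_s⁻¹(u)))³ for u ∈ (0,1), and the integral on the right-hand side is absolutely convergent. -/
open MeasureTheory Filter Set

noncomputable section

private lemma aux_mul_deriv_integrable {U : ℝ → ℝ} (hU : AdmissibleShearFlow U) :
    IntegrableOn (fun y => y * deriv U y) (Ioi (0:ℝ)) := by
  have hUd : Differentiable ℝ U := hU.smooth.differentiable (by simp)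
  have hVcont : Continuous (deriv U) := hU.smooth.continuous_deriv (by exact_mod_cast le_top)
  refine integrableOn_Ioi_of_intervalIntegral_norm_bounded
    (∫ y in Ioi (0:ℝ), (1 - U y)) 0 (b := fun b : ℝ => b) (l := atTop)
    (fun b => (continuous_id.mul hVcont).integrableOn_Ioc) tendsto_id ?_
  filter_upwards [eventually_ge_atTop (0:ℝ)] with b hb
  have hco : Continuous fun x : ℝ => x * deriv U x := continuous_id.mul hVcont
  have h0 : ∫ x in (0:ℝ)..b, ‖x * deriv U x‖ = ∫ x in (0:ℝ)..b, x * deriv U x := by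
    refine intervalIntegral.integral_congr fun x hx => ?_
    rw [Set.uIcc_of_le hb] at hx
    exact Real.norm_of_nonneg (mul_nonneg hx.1 (hU.deriv_pos x hx.1).le)
  have h1 : ∫ x in (0:ℝ)..b, (U x + x * deriv U x) = b * U b - 0 * U 0 :=
    intervalIntegral.integral_eq_sub_of_hasDerivAt (f := fun x => x * U x)
      (fun x _ => by simpa using ((hasDerivAt_id' x).fun_mul (hUd x).hasDerivAt))
      ((hUd.continuous.add hco).intervalIntegrable 0 b)
  have h2 : ∫ x in (0:ℝ)..b, (U x + x * deriv U x)
      = (∫ x in (0:ℝ)..b, U x) + ∫ x in (0:ℝ)..b, x * deriv U x :=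
    intervalIntegral.integral_add (hUd.continuous.intervalIntegrable 0 b)
      (hco.intervalIntegrable 0 b)
  have h3 : ∫ x in (0:ℝ)..b, U x = b - ∫ x in (0:ℝ)..b, (1 - U x) := by
    have : ∫ x in (0:ℝ)..b, ((1:ℝ) - (1 - U x)) = (∫ x in (0:ℝ)..b, (1:ℝ))
        - ∫ x in (0:ℝ)..b, (1 - U x) :=
      intervalIntegral.integral_sub (intervalIntegrable_const)
        ((continuous_const.sub hUd.continuous).intervalIntegrable 0 b)
    simpa using this
  have h4 : ∫ x in (0:ℝ)..b, (1 - U x) ≤ ∫ y in Ioi (0:ℝ), (1 - U y) := by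
    rw [intervalIntegral.integral_of_le hb]
    refine setIntegral_mono_set hU.integrable_defect ?_
      (HasSubset.Subset.eventuallyLE Ioc_subset_Ioi_self)
    rw [EventuallyLE, ae_restrict_iff' measurableSet_Ioi]
    exact ae_of_all _ fun y hy => sub_nonneg.mpr (hU.mem_Ico y (le_of_lt hy)).2.le
  have h5 : b * U b ≤ b := by
    have := (hU.mem_Ico b hb).2.le
    nlinarith
  rw [h0]
  rw [h2] at h1
  linarith

/-- Lemma (singular integral representation of `Φ_inv`). -/
theorem phiInv_singular_integral (U : ℝ → ℝ) (hU : AdmissibleShearFlow U)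
    (μ : ℂ) (hμ : μ ∉ (fun x : ℝ => (x : ℂ)) '' Icc (0:ℝ) 1) :
    IntegrableOn (fun u : ℝ => (gfun U u : ℂ) / ((u : ℂ) - μ)) (Ioo (0:ℝ) 1) ∧
    PhiInv U μ = 1 / (μ * ((deriv U 0 : ℝ) : ℂ))
      + ∫ u in Ioo (0:ℝ) 1, (gfun U u : ℂ) / ((u : ℂ) - μ) := by
  have hUd : Differentiable ℝ U := hU.smooth.differentiable (by simp)
  have hVsm : ContDiff ℝ (⊤ : ℕ∞) (deriv U) := (contDiff_infty_iff_deriv.mp hU.smooth).2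
  have hVd : Differentiable ℝ (deriv U) := hVsm.differentiable (by simp)
  have hVcont : Continuous (deriv U) := hVd.continuous
  have hWeq : iteratedDeriv 2 U = deriv (deriv U) := by
    rw [iteratedDeriv_succ, iteratedDeriv_one]
  have hWcont : Continuous (iteratedDeriv 2 U) := by
    rw [hWeq]; exact hVsm.continuous_deriv (by exact_mod_cast le_top)
  have hVderiv : ∀ y, HasDerivAt (deriv U) (iteratedDeriv 2 U y) y := by
    intro y; rw [hWeq]; exact (hVd y).hasDerivAt
  -- distance to the segment
  obtain ⟨δ, hδpos, hδ⟩ : ∃ δ > 0, ∀ x ∈ Icc (0:ℝ) 1, δ ≤ ‖μ - (x:ℂ)‖ := by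
    obtain ⟨x₀, hx₀, hmin⟩ := isCompact_Icc.exists_isMinOn
      (f := fun x : ℝ => ‖μ - (x:ℂ)‖) ⟨0, le_refl 0, zero_le_one⟩
      ((continuous_const.sub Complex.continuous_ofReal).norm.continuousOn)
    refine ⟨‖μ - (x₀:ℂ)‖, ?_, fun x hx => hmin hx⟩
    rw [gt_iff_lt, norm_pos_iff, sub_ne_zero]
    exact fun h => hμ ⟨x₀, hx₀, h.symm⟩
  have hU01 : ∀ y, 0 ≤ y → U y ∈ Icc (0:ℝ) 1 :=
    fun y hy => ⟨(hU.mem_Ico y hy).1, (hU.mem_Ico y hy).2.le⟩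
  have hδU : ∀ y, 0 ≤ y → δ ≤ ‖μ - (U y : ℂ)‖ := fun y hy => hδ _ (hU01 y hy)
  have hne : ∀ y, 0 ≤ y → (μ - (U y : ℂ)) ≠ 0 :=
    fun y hy => norm_pos_iff.mp (lt_of_lt_of_le hδpos (hδU y hy))
  have hne' : ∀ y, 0 ≤ y → ((U y : ℂ) - μ) ≠ 0 :=
    fun y hy => sub_ne_zero.mpr (sub_ne_zero.mp (hne y hy)).symm
  have hμne : μ ≠ 0 := by
    have := hδ 0 ⟨le_rfl, zero_le_one⟩
    intro h; rw [h] at this; simp at this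
    exact absurd this (not_le.mpr hδpos)
  have hμ1 : μ - 1 ≠ 0 := by
    have h := hδ 1 ⟨zero_le_one, le_rfl⟩
    rw [Complex.ofReal_one] at h
    exact norm_pos_iff.mp (lt_of_lt_of_le hδpos h)
  have hVpos : ∀ y, 0 ≤ y → 0 < deriv U y := hU.deriv_pos
  have hVne : ∀ y, 0 ≤ y → ((deriv U y : ℝ) : ℂ) ≠ 0 :=
    fun y hy => Complex.ofReal_ne_zero.mpr (ne_of_gt (hVpos y hy))
  -- the three functions
  set gC : ℝ → ℂ := fun u => (gfun U u : ℂ) / ((u : ℂ) - μ) with hgCdef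
  set Φi : ℝ → ℂ := fun y => (μ - 1) * ((srcF U y : ℂ) / (μ - (U y : ℂ)) ^ 2) with hΦidef
  set hI : ℝ → ℂ := fun y => (1 - (U y : ℂ)) ^ 2 * ((iteratedDeriv 2 U y : ℝ) : ℂ)
    / (((deriv U y : ℝ) : ℂ) ^ 2 * ((U y : ℂ) - μ)) with hhIdef
  set G : ℝ → ℂ := fun y => -((y : ℂ) * (1 - (U y : ℂ))) / (μ - (U y : ℂ))
    - (1 - (U y : ℂ)) * (1 - (U y : ℂ)) / (((deriv U y : ℝ) : ℂ) * (μ - (U y : ℂ))) with hGdef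
  -- derivative identity
  have hGderiv : ∀ y ∈ Ici (0:ℝ), HasDerivAt G (Φi y - hI y) y := by
    intro y hy
    have hUy : HasDerivAt (fun t : ℝ => ((U t : ℝ) : ℂ)) ((deriv U y : ℝ) : ℂ) y :=
      (hUd y).hasDerivAt.ofReal_comp
    have hVy : HasDerivAt (fun t : ℝ => ((deriv U t : ℝ) : ℂ))
        ((iteratedDeriv 2 U y : ℝ) : ℂ) y := (hVderiv y).ofReal_comp
    have hid : HasDerivAt (fun t : ℝ => ((t : ℝ) : ℂ)) 1 y := by
      simpa using (hasDerivAt_id y).ofReal_comp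
    have h1sub : HasDerivAt (fun t : ℝ => 1 - ((U t : ℝ) : ℂ)) (-((deriv U y : ℝ) : ℂ)) y :=
      hUy.const_sub 1
    have hden : HasDerivAt (fun t : ℝ => μ - ((U t : ℝ) : ℂ)) (-((deriv U y : ℝ) : ℂ)) y :=
      hUy.const_sub μ
    have h1 := ((hid.mul h1sub).neg).div hden (hne y hy)
    have hnum2 := h1sub.mul h1sub
    have hden2 := hVy.mul hden
    have h2 := hnum2.div hden2 (mul_ne_zero (hVne y hy) (hne y hy))
    have htot := h1.sub h2
    convert htot using 1
    · rfl
    · rfl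
    have hμU := hne y hy
    have hμU' := hne' y hy
    have hVC := hVne y hy
    simp only [hΦidef, hhIdef, srcF, Pi.mul_apply, Pi.neg_apply]
    push_cast
    field_simp
    ring
  -- limit of G at infinity
  have hμUc : Tendsto (fun y => μ - (U y : ℂ)) atTop (nhds (μ - 1)) := by
    refine tendsto_const_nhds.sub ?_
    exact ((Complex.continuous_ofReal.tendsto 1).comp hU.tendsto_one)
  have hinvt : Tendsto (fun y => (μ - (U y : ℂ))⁻¹) atTop (nhds (μ - 1)⁻¹) :=
    hμUc.inv₀ hμ1
  have ht1 : Tendsto (fun y : ℝ => -((y : ℂ) * (1 - (U y : ℂ))) / (μ - (U y : ℂ)))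
      atTop (nhds 0) := by
    have hnum : Tendsto (fun y => ((y * (1 - U y) : ℝ) : ℂ)) atTop (nhds 0) := by
      simpa [Function.comp_def] using (Complex.continuous_ofReal.tendsto 0).comp hU.decay_ratio₂
    have := hnum.neg.mul hinvt
    simp only [neg_zero, zero_mul] at this
    refine this.congr fun y => ?_
    push_cast
    ring
  have ht2 : Tendsto (fun y : ℝ => (1 - (U y : ℂ)) * (1 - (U y : ℂ)) / (((deriv U y : ℝ) : ℂ) * (μ - (U y : ℂ))))
      atTop (nhds 0) := by
    have hnum : Tendsto (fun y => (((1 - U y) ^ 2 / deriv U y : ℝ) : ℂ)) atTop (nhds 0) := by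
      simpa [Function.comp_def] using (Complex.continuous_ofReal.tendsto 0).comp hU.decay_ratio₁
    have := hnum.mul hinvt
    rw [zero_mul] at this
    refine this.congr' ?_
    filter_upwards [eventually_ge_atTop (0:ℝ)] with y hy
    have hv := hVne y hy
    have hm := hne y hy
    push_cast
    field_simp
  have hGtend : Tendsto G atTop (nhds 0) := by
    have := ht1.sub ht2
    rw [sub_zero] at this
    exact this
  -- integrability of Φi
  have hbase : IntegrableOn (fun y => (srcF U y : ℂ) / (μ - (U y : ℂ)) ^ 2) (Ioi (0:ℝ)) := by
    have hbnd : IntegrableOn (fun y => ((1 - U y) + y * deriv U y) / δ ^ 2) (Ioi (0:ℝ)) :=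
      (hU.integrable_defect.add (aux_mul_deriv_integrable hU)).div_const _
    refine Integrable.mono' hbnd ?_ ?_
    · refine ContinuousOn.aestronglyMeasurable ?_ measurableSet_Ioi
      refine ContinuousOn.div ?_ ?_ (fun y hy => pow_ne_zero _ (hne y (le_of_lt hy)))
      · exact (Complex.continuous_ofReal.comp
          ((continuous_const.sub hUd.continuous).add (continuous_id.mul hVcont))).continuousOn
      · exact ((continuous_const.sub
          (Complex.continuous_ofReal.comp hUd.continuous)).pow 2).continuousOn
    · rw [ae_restrict_iff' measurableSet_Ioi]
      refine ae_of_all _ fun y hy => ?_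
      have hy0 : (0:ℝ) ≤ y := le_of_lt hy
      rw [norm_div, norm_pow, Complex.norm_real]
      have hsrc : |srcF U y| = (1 - U y) + y * deriv U y := by
        rw [srcF, abs_of_nonneg]
        have := (hU.mem_Ico y hy0).2
        have := mul_nonneg hy0 (hVpos y hy0).le
        linarith
      rw [Real.norm_eq_abs, hsrc]
      refine div_le_div_of_nonneg_left ?_ (by positivity) ?_
      · have := (hU.mem_Ico y hy0).2
        have := mul_nonneg hy0 (hVpos y hy0).le
        linarith
      · exact pow_le_pow_left₀ hδpos.le (hδU y hy0) 2
  have I1 : IntegrableOn Φi (Ioi (0:ℝ)) := hbase.const_mul _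
  -- integrability of hI
  have I2 : IntegrableOn hI (Ioi (0:ℝ)) := by
    have hbnd : IntegrableOn
        (fun y => |(1 - U y) ^ 2 * iteratedDeriv 2 U y / (deriv U y) ^ 2| / δ) (Ioi (0:ℝ)) :=
      hU.decay_ratio₃.abs.div_const _
    refine Integrable.mono' hbnd ?_ ?_
    · refine ContinuousOn.aestronglyMeasurable ?_ measurableSet_Ioi
      refine ContinuousOn.div ?_ ?_ fun y hy =>
        mul_ne_zero (pow_ne_zero _ (hVne y (le_of_lt hy))) (hne' y (le_of_lt hy))
      · exact (((continuous_const.sub (Complex.continuous_ofReal.comp hUd.continuous)).pow 2).mul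
          (Complex.continuous_ofReal.comp hWcont)).continuousOn
      · exact (((Complex.continuous_ofReal.comp hVcont).pow 2).mul
          ((Complex.continuous_ofReal.comp hUd.continuous).sub continuous_const)).continuousOn
    · rw [ae_restrict_iff' measurableSet_Ioi]
      refine ae_of_all _ fun y hy => ?_
      have hy0 : (0:ℝ) ≤ y := le_of_lt hy
      have hv := hVne y hy0
      have heq : hI y = (((1 - U y) ^ 2 * iteratedDeriv 2 U y / (deriv U y) ^ 2 : ℝ) : ℂ)
          / ((U y : ℂ) - μ) := by
        simp only [hhIdef]
        push_cast
        rw [div_div]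
      rw [heq, norm_div, Complex.norm_real, Real.norm_eq_abs]
      refine div_le_div_of_nonneg_left (abs_nonneg _) hδpos ?_
      rw [norm_sub_rev]
      exact hδU y hy0
  -- FTC on (0, ∞)
  have hFTC : ∫ y in Ioi (0:ℝ), (Φi y - hI y) = 0 - G 0 :=
    integral_Ioi_of_hasDerivAt_of_tendsto' hGderiv (I1.sub I2) hGtend
  have hG0 : (0:ℂ) - G 0 = 1 / (μ * ((deriv U 0 : ℝ) : ℂ)) := by
    have hv := hVne 0 le_rfl
    simp only [hGdef, hU.zero_val]
    push_cast
    field_simp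
    ring
  -- change of variables
  have hmono : StrictMonoOn U (Ici (0:ℝ)) := by
    refine strictMonoOn_of_deriv_pos (convex_Ici 0) hUd.continuous.continuousOn ?_
    rw [interior_Ici]
    exact fun x hx => hVpos x (le_of_lt hx)
  have hinjI : InjOn U (Ici (0:ℝ)) := hmono.injOn
  have hinj : InjOn U (Ioi (0:ℝ)) := hinjI.mono Ioi_subset_Ici_self
  have himg : U '' Ioi (0:ℝ) = Ioo (0:ℝ) 1 := by
    apply Subset.antisymm
    · rintro _ ⟨y, hy, rfl⟩
      refine ⟨?_, (hU.mem_Ico y (le_of_lt hy)).2⟩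
      have := hmono (mem_Ici.mpr le_rfl) (mem_Ici.mpr (le_of_lt hy)) hy
      rwa [hU.zero_val] at this
    · rintro u ⟨hu0, hu1⟩
      obtain ⟨Y, hY, hY0⟩ := ((hU.tendsto_one.eventually_const_lt hu1).and
        (eventually_ge_atTop (0:ℝ))).exists
      obtain ⟨y, hy, hyu⟩ := intermediate_value_Icc hY0 hUd.continuous.continuousOn
        ⟨by rw [hU.zero_val]; exact hu0.le, hY.le⟩
      refine ⟨y, ?_, hyu⟩
      rcases eq_or_lt_of_le hy.1 with h | h
      · exfalso
        rw [← h, hU.zero_val] at hyu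
        exact absurd hyu.symm (ne_of_gt hu0)
      · exact h
  have hders : ∀ x ∈ Ioi (0:ℝ), HasDerivWithinAt U (deriv U x) (Ioi (0:ℝ)) x :=
    fun x _ => (hUd x).hasDerivAt.hasDerivWithinAt
  have hpt : ∀ y ∈ Ioi (0:ℝ), |deriv U y| • gC (U y) = hI y := by
    intro y hy
    have hyi : (0:ℝ) ≤ y := le_of_lt hy
    have hiv : shearInv U (U y) = y := hinjI.leftInvOn_invFunOn hyi
    have hvpos := hVpos y hyi
    have hv := hVne y hyi
    have hm := hne' y hyi
    rw [abs_of_pos hvpos]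
    simp only [hgCdef, hhIdef, gfun, shearInv] at *
    rw [hiv]
    rw [Complex.real_smul]
    push_cast
    field_simp
  have hchg : ∫ u in U '' Ioi (0:ℝ), gC u = ∫ y in Ioi (0:ℝ), |deriv U y| • gC (U y) :=
    integral_image_eq_integral_abs_deriv_smul measurableSet_Ioi hders hinj gC
  have hii := integrableOn_image_iff_integrableOn_abs_deriv_smul
    measurableSet_Ioi hders hinj gC
  have hgCint : IntegrableOn gC (Ioo (0:ℝ) 1) := by
    rw [← himg, hii]
    exact I2.congr_fun (fun y hy => (hpt y hy).symm) measurableSet_Ioi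
  refine ⟨hgCint, ?_⟩
  have hIeq : ∫ y in Ioi (0:ℝ), hI y = ∫ u in Ioo (0:ℝ) 1, gC u := by
    rw [← himg, hchg]
    exact (setIntegral_congr_fun measurableSet_Ioi fun y hy => (hpt y hy).symm)
  have hPhi : PhiInv U μ = ∫ y in Ioi (0:ℝ), Φi y := by
    rw [PhiInv, hΦidef, integral_const_mul]
  rw [hPhi]
  have hsplit : ∫ y in Ioi (0:ℝ), Φi y
      = (∫ y in Ioi (0:ℝ), (Φi y - hI y)) + ∫ y in Ioi (0:ℝ), hI y := by
    rw [integral_sub I1 I2]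
    ring
  rw [hsplit, hFTC, hG0, hIeq]

end
end
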